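/- arXiv:1310.1891 — 8 statements merged into one kernel-verified Lean document; each statement's English description precedes it below -/
import Mathlib

section
/- Let q be a prime power, n, k positive integers, ε > 0, and c : 𝔽_q^k → 𝔽_q^n any map. Then for every subset Λ ⊆ 𝔽_q^k with |Λ| = L and every z ∈ 𝔽_q^n: Σ_{x∈Λ} agr(c(x), z) ≤ nL/q + (nL/(2ε)) · (1 + ε²) · (1 − 1/q) − (n/(2Lε)) · Σ_{(x,y) : x,y ∈ Λ, x ≠ y} d(c(x), c(y)), where the last sum ranges over ordered pairs of distinct elements of Λ. -/
open Finset

noncomputable section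

/-- `agr u v` is the number of coordinates on which `u` and `v` agree. -/
def agr {F : Type} [DecidableEq F] {n : ℕ} (u v : Fin n → F) : ℕ :=
  (Finset.univ.filter (fun j => u j = v j)).card

/-- `rdist u v` is the relative Hamming distance between `u` and `v`. -/
def rdist {F : Type} [DecidableEq F] {n : ℕ} (u v : Fin n → F) : ℝ :=
  ((Finset.univ.filter (fun j => u j ≠ v j)).card : ℝ) / n

set_option maxHeartbeats 1600000 in
/-- the average-radius variant of the q-ary Johnson bound
(Theorem A.1 of the paper).  The inner double sum ranges over ordered pairs
of distinct elements of `Λ`. -/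
theorem stmt_8
    {F : Type} [Field F] [Fintype F] [DecidableEq F]
    (q n k : ℕ) (hq : q = Fintype.card F) (hn : 0 < n) (hk : 0 < k)
    (ε : ℝ) (hε : 0 < ε)
    (c : (Fin k → F) → Fin n → F)
    (Λ : Finset (Fin k → F)) (L : ℕ) (hΛ : Λ.card = L)
    (z : Fin n → F) :
    ∑ x ∈ Λ, (agr (c x) z : ℝ)
      ≤ n * L / q + (n * L / (2 * ε)) * (1 + ε ^ 2) * (1 - 1 / q)
        - (n / (2 * L * ε)) * ∑ x ∈ Λ, ∑ y ∈ Λ.erase x, rdist (c x) (c y) := by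
  rcases Nat.eq_zero_or_pos L with hL0 | hLpos
  · subst hL0
    rw [Finset.card_eq_zero] at hΛ
    subst hΛ
    simp
  -- main case
  have hq2 : 2 ≤ q := by rw [hq]; exact Fintype.one_lt_card
  have hnr : (0 : ℝ) < n := by exact_mod_cast hn
  have hLr : (0 : ℝ) < L := by exact_mod_cast hLpos
  have hqr2 : (2 : ℝ) ≤ q := by exact_mod_cast hq2
  have hqr1 : (0 : ℝ) < (q : ℝ) - 1 := by linarith
  have hqr0 : (0 : ℝ) < (q : ℝ) := by linarith
  set m : Fin n → F → ℝ := fun j α => ((Λ.filter fun x => c x j = α).card : ℝ) with hm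
  set A : ℝ := ∑ j, m j (z j) with hA_def
  set S : ℝ := ∑ x ∈ Λ, ∑ y ∈ Λ.erase x, rdist (c x) (c y) with hS_def
  -- agr as a sum of indicators
  have hagr : ∀ u v : Fin n → F, (agr u v : ℝ) = ∑ j, if u j = v j then (1:ℝ) else 0 := by
    intro u v
    rw [agr, Finset.card_filter]
    push_cast
    rfl
  have hfib : ∀ (j : Fin n) (α : F),
      ∑ y ∈ Λ, (if α = c y j then (1:ℝ) else 0) = m j α := by
    intro j α
    rw [Finset.sum_boole]
    simp only [hm]
    congr 1
    apply congrArg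
    apply Finset.filter_congr
    intro y _
    simp [eq_comm]
  -- Step 1 : LHS = A
  have hA : ∑ x ∈ Λ, (agr (c x) z : ℝ) = A := by
    rw [hA_def]
    rw [Finset.sum_congr rfl (fun x _ => hagr (c x) z), Finset.sum_comm]
    refine Finset.sum_congr rfl fun j _ => ?_
    rw [← hfib j (z j)]
    refine Finset.sum_congr rfl fun x _ => ?_
    simp [eq_comm]
  -- Step 2 : fibers sum to L
  have hsum_m : ∀ j : Fin n, ∑ α, m j α = (L : ℝ) := by
    intro j
    have h := Finset.card_eq_sum_card_fiberwise
      (f := fun x => c x j) (s := Λ) (t := (univ : Finset F)) (fun x _ => mem_univ _)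
    rw [hΛ] at h
    simp only [hm]
    exact_mod_cast h.symm
  -- Step 3 : double agreement sum = sum of squared fiber sizes
  have hP : ∑ x ∈ Λ, ∑ y ∈ Λ, (agr (c x) (c y) : ℝ) = ∑ j, ∑ α, (m j α)^2 := by
    have h1 : ∀ x ∈ Λ, ∑ y ∈ Λ, (agr (c x) (c y) : ℝ)
        = ∑ j, m j (c x j) := by
      intro x _
      rw [Finset.sum_congr rfl (fun y _ => hagr (c x) (c y)), Finset.sum_comm]
      exact Finset.sum_congr rfl fun j _ => hfib j (c x j)
    rw [Finset.sum_congr rfl h1, Finset.sum_comm]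
    refine Finset.sum_congr rfl fun j _ => ?_
    rw [← Finset.sum_fiberwise' Λ (fun x => c x j) (fun α => m j α)]
    refine Finset.sum_congr rfl fun α _ => ?_
    rw [Finset.sum_const, nsmul_eq_mul, sq]
  -- Step 4 : per-coordinate Cauchy-Schwarz
  have hCS1 : ∀ j : Fin n,
      (m j (z j))^2 + ((L:ℝ) - m j (z j))^2 / ((q:ℝ) - 1) ≤ ∑ α, (m j α)^2 := by
    intro j
    have hsplit : ∑ α, (m j α)^2
        = (m j (z j))^2 + ∑ α ∈ univ.erase (z j), (m j α)^2 :=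
      (Finset.add_sum_erase _ _ (mem_univ _)).symm
    have hsum_e : ∑ α ∈ univ.erase (z j), m j α = (L:ℝ) - m j (z j) := by
      have h2 := Finset.add_sum_erase univ (m j) (mem_univ (z j))
      rw [hsum_m j] at h2
      linarith
    have hcard : (((univ : Finset F).erase (z j)).card : ℝ) = (q:ℝ) - 1 := by
      rw [Finset.card_erase_of_mem (mem_univ _), Finset.card_univ,
        Nat.cast_sub Fintype.card_pos, hq]
      norm_num
    have hcs := sq_sum_le_card_mul_sum_sq
      (s := (univ : Finset F).erase (z j)) (f := m j)
    rw [hsum_e, hcard] at hcs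
    have hdiv : ((L:ℝ) - m j (z j))^2 / ((q:ℝ) - 1)
        ≤ ∑ α ∈ univ.erase (z j), (m j α)^2 := by
      rw [div_le_iff₀ hqr1]
      linarith [hcs]
    rw [hsplit]
    linarith
  -- Step 5 : global Cauchy-Schwarz
  have hA2 : A^2 ≤ (n:ℝ) * ∑ j, (m j (z j))^2 := by
    have h := sq_sum_le_card_mul_sum_sq (s := (univ : Finset (Fin n)))
      (f := fun j => m j (z j))
    rw [Finset.card_univ, Fintype.card_fin] at h
    rw [hA_def]
    exact h
  have hB2 : ((n:ℝ) * L - A)^2 ≤ (n:ℝ) * ∑ j, ((L:ℝ) - m j (z j))^2 := by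
    have h := sq_sum_le_card_mul_sum_sq (s := (univ : Finset (Fin n)))
      (f := fun j => (L:ℝ) - m j (z j))
    rw [Finset.card_univ, Fintype.card_fin] at h
    have hsum : ∑ j, ((L:ℝ) - m j (z j)) = (n:ℝ) * L - A := by
      rw [Finset.sum_sub_distrib, Finset.sum_const, Finset.card_univ, Fintype.card_fin,
        nsmul_eq_mul, hA_def]
    rw [hsum] at h
    exact h
  -- Step 6 : agreement vs relative distance
  have hard : ∀ u v : Fin n → F, (agr u v : ℝ) = (n:ℝ) - (n:ℝ) * rdist u v := by
    intro u v
    have h := Finset.card_filter_add_card_filter_not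
      (s := (univ : Finset (Fin n))) (p := fun j => u j = v j)
    rw [Finset.card_univ, Fintype.card_fin] at h
    have h' : (agr u v : ℝ) + ((univ.filter (fun j => u j ≠ v j)).card : ℝ) = (n:ℝ) := by
      rw [agr]
      simp only [ne_eq]
      exact_mod_cast h
    rw [rdist]
    have hn0 : (n:ℝ) ≠ 0 := ne_of_gt hnr
    field_simp
    linarith
  have hPS : ∑ x ∈ Λ, ∑ y ∈ Λ, (agr (c x) (c y) : ℝ) = (n:ℝ) * (L:ℝ)^2 - (n:ℝ) * S := by
    have hrow : ∀ x ∈ Λ, ∑ y ∈ Λ, (agr (c x) (c y) : ℝ)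
        = (n:ℝ) * L - (n:ℝ) * ∑ y ∈ Λ.erase x, rdist (c x) (c y) := by
      intro x hx
      rw [← Finset.add_sum_erase _ _ hx]
      have hxx : (agr (c x) (c x) : ℝ) = (n:ℝ) := by
        rw [agr]
        simp
      rw [hxx, Finset.sum_congr rfl (fun y _ => hard (c x) (c y)),
        Finset.sum_sub_distrib, Finset.sum_const, Finset.card_erase_of_mem hx, hΛ,
        nsmul_eq_mul, Nat.cast_sub hLpos, ← Finset.mul_sum]
      push_cast
      ring
    rw [Finset.sum_congr rfl hrow, Finset.sum_sub_distrib, Finset.sum_const, hΛ,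
      nsmul_eq_mul, ← Finset.mul_sum, ← hS_def]
    ring
  -- Step 7 : the key quadratic inequality
  have hK : A^2 / n + ((n:ℝ) * L - A)^2 / (n * ((q:ℝ) - 1))
      ≤ (n:ℝ) * (L:ℝ)^2 - (n:ℝ) * S := by
    have hsumCS : ∑ j, (m j (z j))^2 + (∑ j, ((L:ℝ) - m j (z j))^2) / ((q:ℝ) - 1)
        ≤ (n:ℝ) * (L:ℝ)^2 - (n:ℝ) * S := by
      have h1 : ∑ j, ((m j (z j))^2 + ((L:ℝ) - m j (z j))^2 / ((q:ℝ) - 1))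
          ≤ ∑ j, ∑ α, (m j α)^2 :=
        Finset.sum_le_sum fun j _ => hCS1 j
      rw [Finset.sum_add_distrib, ← Finset.sum_div] at h1
      rw [← hP, hPS] at h1
      exact h1
    have h2 : A^2 / n ≤ ∑ j, (m j (z j))^2 := by
      rw [div_le_iff₀ hnr]
      nlinarith [hA2]
    have h3 : ((n:ℝ) * L - A)^2 / (n * ((q:ℝ) - 1))
        ≤ (∑ j, ((L:ℝ) - m j (z j))^2) / ((q:ℝ) - 1) := by
      rw [div_le_div_iff₀ (by positivity) hqr1]
      nlinarith [hB2, hqr1]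
    linarith
  clear_value A S
  clear hA_def hS_def hagr hfib hsum_m hP hCS1 hA2 hB2 hard hPS hm m
  -- Step 8 : final algebra
  set B : ℝ := A - (n:ℝ) * L / q with hB_def
  set M : ℝ := ε * n * L * (1 - 1 / (q:ℝ)) with hM_def
  clear_value B M
  have h1q : (0:ℝ) < 1 - 1 / (q:ℝ) := by
    rw [sub_pos, div_lt_one hqr0]; linarith
  have hM : 0 < M := by rw [hM_def]; positivity
  have hident : A^2 / n + ((n:ℝ) * L - A)^2 / (n * ((q:ℝ) - 1))
      = (n:ℝ) * (L:ℝ)^2 / q + B^2 * q / (n * ((q:ℝ) - 1)) := by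
    rw [hB_def]
    field_simp
    ring
  set C : ℝ := ((n:ℝ) * L * (1 - 1 / (q:ℝ)))^2 - (n:ℝ)^2 * (1 - 1 / (q:ℝ)) * S with hC_def
  clear_value C
  have hclaim1 : B^2 ≤ C := by
    have h4 : B^2 * q / (n * ((q:ℝ) - 1))
        ≤ (n:ℝ) * (L:ℝ)^2 - (n:ℝ) * S - (n:ℝ) * (L:ℝ)^2 / q := by
      rw [hident] at hK; linarith
    have h5 : B^2 ≤ ((n:ℝ) * (L:ℝ)^2 - (n:ℝ) * S - (n:ℝ) * (L:ℝ)^2 / q)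
        * ((n:ℝ) * ((q:ℝ) - 1)) / q := by
      rw [le_div_iff₀ hqr0]
      calc B^2 * q = (B^2 * q / ((n:ℝ) * ((q:ℝ) - 1))) * ((n:ℝ) * ((q:ℝ) - 1)) := by
            rw [div_mul_cancel₀ _ (by positivity : ((n:ℝ) * ((q:ℝ) - 1)) ≠ 0)]
        _ ≤ ((n:ℝ) * (L:ℝ)^2 - (n:ℝ) * S - (n:ℝ) * (L:ℝ)^2 / q) * ((n:ℝ) * ((q:ℝ) - 1)) :=
            mul_le_mul_of_nonneg_right h4 (by positivity)
    have h6 : ((n:ℝ) * (L:ℝ)^2 - (n:ℝ) * S - (n:ℝ) * (L:ℝ)^2 / q)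
        * ((n:ℝ) * ((q:ℝ) - 1)) / q = C := by
      rw [hC_def]
      field_simp
      ring
    exact h5.trans_eq h6
  clear hK hident
  have hclaim2 : B ≤ (B^2 + M^2) / (2 * M) := by
    rw [le_div_iff₀ (by positivity : (0:ℝ) < 2 * M)]
    nlinarith [sq_nonneg (B - M)]
  have hfin : B ≤ (C + M^2) / (2 * M) := by
    calc B ≤ (B^2 + M^2) / (2 * M) := hclaim2
      _ ≤ (C + M^2) / (2 * M) := by
          apply div_le_div_of_nonneg_right _ (by positivity)
          linarith
  have heq : (C + M^2) / (2 * M)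
      = ((n:ℝ) * L / (2 * ε)) * (1 + ε ^ 2) * (1 - 1 / (q:ℝ)) - ((n:ℝ) / (2 * L * ε)) * S := by
    rw [hC_def, hM_def]
    have hq1 : (q:ℝ) - 1 ≠ 0 := ne_of_gt hqr1
    have h11 : (1:ℝ) - 1/(q:ℝ) = ((q:ℝ) - 1)/(q:ℝ) := by field_simp
    rw [h11]
    field_simp
    ring
  rw [hA]
  rw [heq] at hfin
  rw [hB_def] at hfin
  linarith
end
end

section
/- Let q be a prime power, n, k positive integers, and c : 𝔽_q^k → 𝔽_q^n any map. Then for every subset Λ ⊆ 𝔽_q^k with |Λ| = L and every z ∈ 𝔽_q^n: Σ_{x∈Λ} agr(c(x), z) ≤ (1/2) · ( n + √( n² + 4n²L(L−1) − 4n² · Σ_{(x,y) : x,y ∈ Λ, x ≠ y} d(c(x), c(y)) ) ), where the sum ranges over ordered pairs of distinct elements of Λ. -/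
open Finset

noncomputable section

/-- the second average-radius variant of the Johnson bound
(Theorem A.2 of the paper), following MacWilliams–Sloane.  The sum in the
square root ranges over ordered pairs of distinct elements of `Λ`. -/
theorem stmt_9
    {F : Type} [Field F] [Fintype F] [DecidableEq F]
    (n k : ℕ) (hn : 0 < n) (hk : 0 < k)
    (c : (Fin k → F) → Fin n → F)
    (Λ : Finset (Fin k → F)) (L : ℕ) (hΛ : Λ.card = L)
    (z : Fin n → F) :
    ∑ x ∈ Λ, (agr (c x) z : ℝ)
      ≤ (1 / 2) * ((n : ℝ) + Real.sqrt ((n : ℝ) ^ 2 + 4 * (n : ℝ) ^ 2 * L * (L - 1)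
          - 4 * (n : ℝ) ^ 2 * ∑ x ∈ Λ, ∑ y ∈ Λ.erase x, rdist (c x) (c y))) := by
    classical
  have hn' : (0:ℝ) < n := by exact_mod_cast hn
  set S : ℝ := ∑ x ∈ Λ, (agr (c x) z : ℝ) with hS
  set A : ℝ := ∑ x ∈ Λ, ∑ y ∈ Λ.erase x, (agr (c x) (c y) : ℝ) with hA
  -- rdist identity
  have hrd : ∀ u v : Fin n → F, (n:ℝ) * rdist u v = (n:ℝ) - (agr u v : ℝ) := by
    intro u v
    have h1 : (Finset.univ.filter (fun j => u j = v j)).card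
        + (Finset.univ.filter (fun j => ¬ u j = v j)).card = n := by
      rw [Finset.card_filter_add_card_filter_not]; simp
    have h2 : ((Finset.univ.filter (fun j => u j ≠ v j)).card : ℝ)
        = (n:ℝ) - (agr u v : ℝ) := by
      unfold agr
      have : ((Finset.univ.filter (fun j => u j = v j)).card : ℝ)
          + ((Finset.univ.filter (fun j => ¬ u j = v j)).card : ℝ) = n := by
        exact_mod_cast congrArg (Nat.cast : ℕ → ℝ) h1
      simp only [ne_eq]
      linarith [this]
    rw [rdist, h2, mul_div_cancel₀ _ hn'.ne']
  -- expression under sqrt equals n² + 4nA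
  have hE : (n : ℝ) ^ 2 + 4 * (n : ℝ) ^ 2 * L * (L - 1)
          - 4 * (n : ℝ) ^ 2 * ∑ x ∈ Λ, ∑ y ∈ Λ.erase x, rdist (c x) (c y)
        = (n:ℝ)^2 + 4 * n * A := by
    have hsum : (n:ℝ)^2 * ∑ x ∈ Λ, ∑ y ∈ Λ.erase x, rdist (c x) (c y)
        = ∑ x ∈ Λ, ∑ y ∈ Λ.erase x, ((n:ℝ) * ((n:ℝ) - (agr (c x) (c y) : ℝ))) := by
      rw [Finset.mul_sum]
      refine Finset.sum_congr rfl fun x hx => ?_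
      rw [Finset.mul_sum]
      refine Finset.sum_congr rfl fun y hy => ?_
      rw [← hrd (c x) (c y)]; ring
    rcases Nat.eq_zero_or_pos L with hL | hL
    · have hΛe : Λ = ∅ := Finset.card_eq_zero.mp (hΛ.trans (by omega))
      subst hΛe
      simp only [Finset.sum_empty, mul_zero, sub_zero] at *
      rw [hA]; simp [hL]
    · have hc1 : ((L - 1 : ℕ) : ℝ) = (L:ℝ) - 1 := by
        have : 1 ≤ L := hL
        push_cast [Nat.cast_sub this]; ring
      have hsum2 : ∑ x ∈ Λ, ∑ y ∈ Λ.erase x, ((n:ℝ) * ((n:ℝ) - (agr (c x) (c y) : ℝ)))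
          = (L:ℝ) * ((L:ℝ) - 1) * (n:ℝ)^2 - (n:ℝ) * A := by
        have step : ∀ x ∈ Λ, ∑ y ∈ Λ.erase x, ((n:ℝ) * ((n:ℝ) - (agr (c x) (c y) : ℝ)))
            = ((L:ℝ) - 1) * (n:ℝ)^2 - (n:ℝ) * ∑ y ∈ Λ.erase x, (agr (c x) (c y) : ℝ) := by
          intro x hx
          have hcard : (Λ.erase x).card = L - 1 := by
            rw [Finset.card_erase_of_mem hx, hΛ]
          simp only [mul_sub, Finset.sum_sub_distrib, Finset.sum_const, nsmul_eq_mul,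
            ← Finset.mul_sum, hcard, hc1]
          ring
        rw [Finset.sum_congr rfl step, Finset.sum_sub_distrib, Finset.sum_const,
          nsmul_eq_mul, hΛ, ← Finset.mul_sum, ← hA]
        ring
      have := hsum.trans hsum2
      nlinarith [this]
  -- coordinate counts
  set a : Fin n → ℕ := fun j => (Λ.filter fun x => c x j = z j).card with ha
  have hS_eq : S = ∑ j : Fin n, (a j : ℝ) := by
    rw [hS]
    simp only [ha, agr, Finset.card_filter]
    push_cast
    rw [Finset.sum_comm]
  -- A lower bound
  have hA_eq : A = ∑ j : Fin n, ∑ x ∈ Λ, ∑ y ∈ Λ.erase x,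
      (if c x j = c y j then (1:ℝ) else 0) := by
    rw [hA]
    simp only [agr, Finset.card_filter]
    push_cast
    rw [Finset.sum_comm]
    refine Finset.sum_congr rfl fun j hj => ?_
    rw [Finset.sum_comm]
  have key : ∀ j : Fin n, (a j : ℝ) * ((a j : ℝ) - 1)
      ≤ ∑ x ∈ Λ, ∑ y ∈ Λ.erase x, (if c x j = c y j then (1:ℝ) else 0) := by
    intro j
    set T : Finset (Fin k → F) := Λ.filter (fun x => c x j = z j) with hT
    have hsub : T ⊆ Λ := Finset.filter_subset _ _
    have hmem : ∀ x ∈ T, c x j = z j := fun x hx => (Finset.mem_filter.mp hx).2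
    have step1 : ∑ x ∈ T, ∑ y ∈ T.erase x, (if c x j = c y j then (1:ℝ) else 0)
        ≤ ∑ x ∈ Λ, ∑ y ∈ Λ.erase x, (if c x j = c y j then (1:ℝ) else 0) := by
      refine Finset.sum_le_sum_of_subset_of_nonneg hsub ?_ |>.trans' ?_
      · intro x _ _
        exact Finset.sum_nonneg fun y _ => by positivity
      · refine Finset.sum_le_sum fun x hx => ?_
        refine Finset.sum_le_sum_of_subset_of_nonneg
          (Finset.erase_subset_erase _ hsub) fun y _ _ => by positivity
    have step2 : ∑ x ∈ T, ∑ y ∈ T.erase x, (if c x j = c y j then (1:ℝ) else 0)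
        = (T.card : ℝ) * ((T.card - 1 : ℕ) : ℝ) := by
      have : ∀ x ∈ T, ∑ y ∈ T.erase x, (if c x j = c y j then (1:ℝ) else 0)
          = ((T.card - 1 : ℕ) : ℝ) := by
        intro x hx
        have : ∀ y ∈ T.erase x, (if c x j = c y j then (1:ℝ) else 0) = 1 := by
          intro y hy
          have hyT : y ∈ T := Finset.mem_of_mem_erase hy
          rw [if_pos ((hmem x hx).trans (hmem y hyT).symm)]
        rw [Finset.sum_congr rfl this, Finset.sum_const, Finset.card_erase_of_mem hx,
          nsmul_eq_mul, mul_one]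
      rw [Finset.sum_congr rfl this, Finset.sum_const, nsmul_eq_mul]
    have hTa : T.card = a j := rfl
    have hlow : (a j : ℝ) * ((a j : ℝ) - 1) ≤ (T.card : ℝ) * ((T.card - 1 : ℕ) : ℝ) := by
      rw [hTa]
      rcases Nat.eq_zero_or_pos (a j) with h0 | h0
      · simp [h0]
      · rw [Nat.cast_sub h0]; simp
    calc (a j : ℝ) * ((a j : ℝ) - 1) ≤ _ := hlow
      _ = _ := step2.symm
      _ ≤ _ := step1
  have cauchy : (∑ j : Fin n, (a j:ℝ))^2 ≤ (n:ℝ) * ∑ j : Fin n, (a j:ℝ)^2 := by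
    have h := sq_sum_le_card_mul_sum_sq (s := (Finset.univ : Finset (Fin n)))
      (f := fun j : Fin n => (a j : ℝ))
    simpa using h
  have hA_ge : ∑ j : Fin n, ((a j:ℝ)^2 - (a j:ℝ)) ≤ A := by
    rw [hA_eq]
    refine Finset.sum_le_sum fun j _ => ?_
    calc (a j:ℝ)^2 - (a j:ℝ) = (a j:ℝ) * ((a j:ℝ) - 1) := by ring
      _ ≤ _ := key j
  have hsq : (2*S - (n:ℝ))^2 ≤ (n:ℝ)^2 + 4*n*A := by
    have h1 : S^2 ≤ (n:ℝ) * ∑ j : Fin n, (a j:ℝ)^2 := by rw [hS_eq]; exact cauchy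
    have h3 : ∑ j : Fin n, ((a j:ℝ)^2 - (a j:ℝ)) = (∑ j : Fin n, (a j:ℝ)^2) - S := by
      rw [hS_eq, Finset.sum_sub_distrib]
    have h4 : (n:ℝ) * ((∑ j : Fin n, (a j:ℝ)^2) - S) ≤ (n:ℝ) * A :=
      mul_le_mul_of_nonneg_left (h3 ▸ hA_ge) hn'.le
    nlinarith [h1, h4]
  have hsqrt : 2*S - (n:ℝ) ≤ Real.sqrt ((n:ℝ)^2 + 4*n*A) := by
    calc 2*S - (n:ℝ) ≤ |2*S - (n:ℝ)| := le_abs_self _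
      _ = Real.sqrt ((2*S-(n:ℝ))^2) := (Real.sqrt_sq_eq_abs _).symm
      _ ≤ _ := Real.sqrt_le_sqrt hsq
  rw [hE]
  linarith [hsqrt]
end
end

section
/- Let q be a prime power, n, k positive integers, 0 < ε ≤ 1, and c : 𝔽_q^k → 𝔽_q^n any map. Let Λ ⊆ 𝔽_q^k with |Λ| = L ≥ 2/ε², and suppose d(c(x), c(y)) ≥ 1 − 1/q − ε² for all distinct x, y ∈ Λ. Then for every z ∈ 𝔽_q^n: Σ_{x∈Λ} agr(c(x), z) ≤ nL·(1/q + (5/4)ε); equivalently, the average relative distance (1/L)·Σ_{x∈Λ} d(c(x), z) is at least 1 − 1/q − (5/4)ε. -/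
open Finset

noncomputable section

lemma agr_add_dist {F : Type} [DecidableEq F] {n : ℕ} (u v : Fin n → F) :
    agr u v + (Finset.univ.filter (fun j => u j ≠ v j)).card = n := by
  classical
  rw [agr, Finset.card_filter_add_card_filter_not]
  simp

set_option maxHeartbeats 1000000 in
/-- the Remark after Theorem A.1 of the paper.  If all pairwise
distances among the `L ≥ 2/ε²` codewords of `Λ` are at least `1 - 1/q - ε²`,
then the total agreement with any `z` is at most `nL(1/q + (5/4)ε)`;
equivalently the average distance from `z` to `Λ` is at least
`1 - 1/q - (5/4)ε`. -/
theorem stmt_10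
    {F : Type} [Field F] [Fintype F] [DecidableEq F]
    (q n k : ℕ) (hq : q = Fintype.card F) (hn : 0 < n) (hk : 0 < k)
    (ε : ℝ) (hε0 : 0 < ε) (hε1 : ε ≤ 1)
    (c : (Fin k → F) → Fin n → F)
    (Λ : Finset (Fin k → F)) (L : ℕ) (hΛ : Λ.card = L)
    (hL : 2 / ε ^ 2 ≤ (L : ℝ))
    (hdist : ∀ x ∈ Λ, ∀ y ∈ Λ, x ≠ y →
      1 - 1 / (q : ℝ) - ε ^ 2 ≤ rdist (c x) (c y)) :
    ∀ z : Fin n → F,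
      (∑ x ∈ Λ, (agr (c x) z : ℝ)) ≤ n * L * (1 / q + (5 / 4) * ε) ∧
      1 - 1 / (q : ℝ) - (5 / 4) * ε ≤ ((L : ℝ))⁻¹ * ∑ x ∈ Λ, rdist (c x) z := by
  classical
  have hq1 : (1:ℝ) ≤ (q:ℝ) := by
    have := Fintype.card_pos (α := F)
    have : 1 ≤ q := by omega
    exact_mod_cast this
  have hq0 : (0:ℝ) < (q:ℝ) := by linarith
  have hL2 : (2:ℝ) ≤ (L:ℝ) := by
    have h1 : ε ^ 2 ≤ 1 := by nlinarith
    have h2 : (0:ℝ) < ε ^ 2 := by positivity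
    calc (2:ℝ) = 2 / 1 := by ring
    _ ≤ 2 / ε ^ 2 := by
        apply div_le_div_of_nonneg_left (by norm_num) h2 h1
    _ ≤ L := hL
  have hLpos : (0:ℝ) < (L:ℝ) := by linarith
  have hnpos : (0:ℝ) < (n:ℝ) := by exact_mod_cast hn
  -- key bound on ε² L
  have hεL : (2:ℝ) ≤ ε ^ 2 * L := by
    have h2 : (0:ℝ) < ε ^ 2 := by positivity
    have := (div_le_iff₀ h2).mp hL
    nlinarith [this]
  intro z
  set M : Fin n → F → ℝ := fun j a => ((Λ.filter fun x => c x j = a).card : ℝ) with hMdef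
  -- S = ∑ j, M j (z j)
  have hS : (∑ x ∈ Λ, (agr (c x) z : ℝ)) = ∑ j, M j (z j) := by
    simp only [agr, hMdef, Finset.card_filter]
    push_cast
    rw [Finset.sum_comm]
  -- ∑_a M j a = L
  have hMsum : ∀ j : Fin n, ∑ a : F, M j a = (L : ℝ) := by
    intro j
    simp only [hMdef]
    rw [← Nat.cast_sum]
    norm_cast
    rw [← hΛ]
    exact (Finset.card_eq_sum_card_fiberwise (fun x _ => Finset.mem_univ (c x j))).symm
  -- pair sum identity
  have hfib : ∀ j : Fin n, ∑ x ∈ Λ, M j (c x j) = ∑ a : F, (M j a) ^ 2 := by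
    intro j
    rw [← Finset.sum_fiberwise Λ (fun x => c x j) (fun x => M j (c x j))]
    apply Finset.sum_congr rfl
    intro a _
    have h1 : ∀ x ∈ Λ.filter (fun x => c x j = a), M j (c x j) = M j a := by
      intro x hx
      rw [(Finset.mem_filter.mp hx).2]
    rw [Finset.sum_congr rfl h1, Finset.sum_const, nsmul_eq_mul, sq]
  have hP : ∑ x ∈ Λ, ∑ y ∈ Λ, (agr (c x) (c y) : ℝ) = ∑ j, ∑ a : F, (M j a) ^ 2 := by
    have h1 : ∀ x ∈ Λ, ∀ y ∈ Λ, (agr (c x) (c y) : ℝ)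
        = ∑ j, (if c x j = c y j then (1:ℝ) else 0) := by
      intro x _ y _
      rw [agr, Finset.card_filter]
      push_cast
      rfl
    calc ∑ x ∈ Λ, ∑ y ∈ Λ, (agr (c x) (c y) : ℝ)
        = ∑ x ∈ Λ, ∑ y ∈ Λ, ∑ j, (if c x j = c y j then (1:ℝ) else 0) := by
          apply Finset.sum_congr rfl; intro x hx
          exact Finset.sum_congr rfl (fun y hy => h1 x hx y hy)
      _ = ∑ x ∈ Λ, ∑ j, ∑ y ∈ Λ, (if c x j = c y j then (1:ℝ) else 0) :=
          Finset.sum_congr rfl (fun x _ => Finset.sum_comm)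
      _ = ∑ j, ∑ x ∈ Λ, ∑ y ∈ Λ, (if c x j = c y j then (1:ℝ) else 0) :=
          Finset.sum_comm
      _ = ∑ j, ∑ x ∈ Λ, M j (c x j) := by
          apply Finset.sum_congr rfl; intro j _
          apply Finset.sum_congr rfl; intro x _
          simp only [hMdef, Finset.card_filter]
          push_cast
          apply Finset.sum_congr rfl; intro y _
          by_cases h : c x j = c y j <;> simp [h, eq_comm]
      _ = ∑ j, ∑ a : F, (M j a) ^ 2 := by
          exact Finset.sum_congr rfl (fun j _ => hfib j)
  -- pairwise agreement bound
  have hagr : ∀ x ∈ Λ, ∀ y ∈ Λ, x ≠ y →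
      (agr (c x) (c y) : ℝ) ≤ n * (1 / q + ε ^ 2) := by
    intro x hx y hy hxy
    have hd := hdist x hx y hy hxy
    have hsum := agr_add_dist (c x) (c y)
    have hsum' : (agr (c x) (c y) : ℝ)
        + ((Finset.univ.filter (fun j => c x j ≠ c y j)).card : ℝ) = n := by
      exact_mod_cast congrArg (Nat.cast : ℕ → ℝ) hsum
    rw [rdist, le_div_iff₀ hnpos] at hd
    nlinarith [hd, hsum', hnpos]
  -- bound on pair sum
  have hPbound : ∑ j, ∑ a : F, (M j a) ^ 2
      ≤ L * n + L * (L - 1) * (n * (1 / q + ε ^ 2)) := by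
    rw [← hP]
    have hterm : ∀ x ∈ Λ, ∑ y ∈ Λ, (agr (c x) (c y) : ℝ)
        ≤ n + (L - 1) * (n * (1 / q + ε ^ 2)) := by
      intro x hx
      rw [← Finset.sum_erase_add Λ _ hx]
      have h1 : ∑ y ∈ Λ.erase x, (agr (c x) (c y) : ℝ)
          ≤ (L - 1) * (n * (1 / q + ε ^ 2)) := by
        have := Finset.sum_le_card_nsmul (Λ.erase x)
          (fun y => (agr (c x) (c y) : ℝ)) (n * (1 / q + ε ^ 2))
          (fun y hy => hagr x hx y (Finset.mem_of_mem_erase hy)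
            (fun h => (Finset.ne_of_mem_erase hy) h.symm))
        rw [Finset.card_erase_of_mem hx, hΛ] at this
        have hL1 : 1 ≤ L := by exact_mod_cast (by linarith : (1:ℝ) ≤ L)
        calc ∑ y ∈ Λ.erase x, (agr (c x) (c y) : ℝ)
            ≤ ((L - 1 : ℕ) : ℝ) * (n * (1 / q + ε ^ 2)) := by
              simpa [nsmul_eq_mul] using this
          _ = ((L:ℝ) - 1) * (n * (1 / q + ε ^ 2)) := by
              congr 1
              rw [Nat.cast_sub hL1, Nat.cast_one]
      have h2 : (agr (c x) (c x) : ℝ) ≤ n := by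
        have : agr (c x) (c x) ≤ n := by
          rw [agr]; simpa using Finset.card_filter_le Finset.univ _
        exact_mod_cast this
      linarith
    calc ∑ x ∈ Λ, ∑ y ∈ Λ, (agr (c x) (c y) : ℝ)
        ≤ ∑ x ∈ Λ, ((n:ℝ) + (L - 1) * (n * (1 / q + ε ^ 2))) :=
          Finset.sum_le_sum hterm
      _ = L * n + L * (L - 1) * (n * (1 / q + ε ^ 2)) := by
          rw [Finset.sum_const, hΛ, nsmul_eq_mul]; ring
  -- centered second moment
  have hQ : ∑ j, ∑ a : F, (M j a - L / q) ^ 2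
      = (∑ j, ∑ a : F, (M j a) ^ 2) - n * L ^ 2 / q := by
    have hcard : (Finset.univ : Finset F).card = q := hq.symm
    have hj : ∀ j : Fin n, ∑ a : F, (M j a - L / q) ^ 2
        = (∑ a : F, (M j a) ^ 2) - L ^ 2 / q := by
      intro j
      have e : ∀ a : F, (M j a - L / q) ^ 2
          = M j a ^ 2 - 2 * (L / q) * M j a + (L / q) ^ 2 := fun a => by ring
      rw [Finset.sum_congr rfl (fun a _ => e a), Finset.sum_add_distrib,
        Finset.sum_sub_distrib, ← Finset.mul_sum, hMsum j, Finset.sum_const,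
        nsmul_eq_mul, hcard]
      field_simp
      ring
    rw [Finset.sum_congr rfl (fun j _ => hj j), Finset.sum_sub_distrib,
      Finset.sum_const, Finset.card_univ, Fintype.card_fin, nsmul_eq_mul]
    ring
  have hQbound : ∑ j, ∑ a : F, (M j a - L / q) ^ 2 ≤ (3 / 2) * n * L ^ 2 * ε ^ 2 := by
    rw [hQ]
    have h1 : L * n + L * (L - 1) * (n * (1 / q + ε ^ 2)) - n * L ^ 2 / q
        ≤ (3 / 2) * n * L ^ 2 * ε ^ 2 := by
      have key : (L:ℝ) * n ≤ (1 / 2) * n * L ^ 2 * ε ^ 2 := by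
        nlinarith [mul_le_mul_of_nonneg_right hεL (mul_pos hnpos hLpos).le]
      have h2 : (L:ℝ) * (L - 1) * (n * (1 / q + ε ^ 2)) - n * L ^ 2 / q
          ≤ n * L ^ 2 * ε ^ 2 := by
        have e1 : (L:ℝ) * (L - 1) * (n * (1 / q + ε ^ 2)) - n * L ^ 2 / q
            = n * L ^ 2 * ε ^ 2 - L * n / q - L * n * ε ^ 2 := by field_simp; ring
        rw [e1]
        have : (0:ℝ) ≤ L * n / q := by positivity
        have : (0:ℝ) ≤ L * n * ε ^ 2 := by positivity
        linarith
      linarith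
    linarith [sub_le_sub_right hPbound ((n:ℝ) * L ^ 2 / q), h1]
  -- pointwise: (M j (z j) - L/q)² ≤ inner sum
  have hpt : ∀ j : Fin n, (M j (z j) - L / q) ^ 2 ≤ ∑ a : F, (M j a - L / q) ^ 2 := by
    intro j
    exact Finset.single_le_sum (f := fun a => (M j a - L / q) ^ 2)
      (fun a _ => sq_nonneg _) (Finset.mem_univ (z j))
  -- Cauchy-Schwarz on |M j (z j) - L/q|
  set T : ℝ := ∑ j, |M j (z j) - L / q| with hT
  have hT2 : T ^ 2 ≤ n * ∑ j, (M j (z j) - L / q) ^ 2 := by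
    have := sq_sum_le_card_mul_sum_sq (s := (Finset.univ : Finset (Fin n)))
      (f := fun j => |M j (z j) - L / q|)
    simp only [Finset.card_univ, Fintype.card_fin, sq_abs] at this
    exact_mod_cast this
  have hT2' : T ^ 2 ≤ (3 / 2) * n ^ 2 * L ^ 2 * ε ^ 2 := by
    have h1 : ∑ j, (M j (z j) - L / q) ^ 2 ≤ ∑ j, ∑ a : F, (M j a - L / q) ^ 2 :=
      Finset.sum_le_sum (fun j _ => hpt j)
    calc T ^ 2 ≤ n * ∑ j, (M j (z j) - L / q) ^ 2 := hT2
      _ ≤ n * ∑ j, ∑ a : F, (M j a - L / q) ^ 2 :=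
          mul_le_mul_of_nonneg_left h1 hnpos.le
      _ ≤ n * ((3 / 2) * n * L ^ 2 * ε ^ 2) :=
          mul_le_mul_of_nonneg_left hQbound hnpos.le
      _ = (3 / 2) * n ^ 2 * L ^ 2 * ε ^ 2 := by ring
  have hTpos : 0 ≤ T := Finset.sum_nonneg (fun j _ => abs_nonneg _)
  have hTge : ∑ j, (M j (z j) - L / q) ≤ T :=
    Finset.sum_le_sum (fun j _ => le_abs_self _)
  clear_value T
  have hTle : T ≤ (5 / 4) * n * L * ε := by
    have hB : (0:ℝ) ≤ (5 / 4) * n * L * ε := by positivity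
    have h25 : T ^ 2 ≤ ((5 / 4) * n * L * ε) ^ 2 := by
      have e : ((5 / 4) * n * L * ε) ^ 2 = (25 / 16) * n ^ 2 * L ^ 2 * ε ^ 2 := by ring
      have hnn : (0:ℝ) ≤ n ^ 2 * L ^ 2 * ε ^ 2 := by positivity
      rw [e]; linarith [hT2']
    exact (pow_le_pow_iff_left₀ hTpos hB two_ne_zero).mp h25
  -- first conclusion
  have hmain : (∑ x ∈ Λ, (agr (c x) z : ℝ)) ≤ n * L * (1 / q + (5 / 4) * ε) := by
    rw [hS]
    have h1 : ∑ j, M j (z j) - n * L / q = ∑ j, (M j (z j) - L / q) := by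
      rw [Finset.sum_sub_distrib, Finset.sum_const, Finset.card_univ,
        Fintype.card_fin, nsmul_eq_mul]
      ring
    have h2 : ∑ j, (M j (z j) - L / q) ≤ T := hTge
    have h3 : ∑ j, M j (z j) ≤ n * L / q + (5 / 4) * n * L * ε := by
      linarith [h2, hTle, h1.le, h1.ge]
    calc ∑ j, M j (z j) ≤ n * L / q + (5 / 4) * n * L * ε := h3
      _ = n * L * (1 / q + (5 / 4) * ε) := by ring
  refine ⟨hmain, ?_⟩
  -- second conclusion
  have hrd : ∀ x ∈ Λ, rdist (c x) z = 1 - (agr (c x) z : ℝ) / n := by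
    intro x _
    have hsum := agr_add_dist (c x) z
    have hsum' : (agr (c x) z : ℝ)
        + ((Finset.univ.filter (fun j => c x j ≠ z j)).card : ℝ) = n := by
      exact_mod_cast congrArg (Nat.cast : ℕ → ℝ) hsum
    rw [rdist]
    field_simp
    linarith
  have hsum2 : ∑ x ∈ Λ, rdist (c x) z = L - (∑ x ∈ Λ, (agr (c x) z : ℝ)) / n := by
    rw [Finset.sum_congr rfl hrd, Finset.sum_sub_distrib, Finset.sum_const, hΛ,
      nsmul_eq_mul, Finset.sum_div]
    ring
  rw [hsum2]
  have h4 : (∑ x ∈ Λ, (agr (c x) z : ℝ)) / n ≤ L * (1 / q + (5 / 4) * ε) := by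
    rw [div_le_iff₀ hnpos]
    calc (∑ x ∈ Λ, (agr (c x) z : ℝ)) ≤ n * L * (1 / q + (5 / 4) * ε) := hmain
      _ = L * (1 / q + (5 / 4) * ε) * n := by ring
  rw [le_inv_mul_iff₀ hLpos]
  nlinarith [h4, hLpos]
end
end

section
/- There is an absolute constant C₅ such that the following holds. Let q be a prime power, n ≥ 1, and L ≥ 2 an integer. Let Λ be a finite nonempty set of vectors in 𝔽_q^n with |Λ| ≤ L, and let Λ' ⊆ Λ be a random subset obtained by including each element of Λ independently with probability 1/2. Then for every coordinate j ∈ {1,…,n}: 𝔼[ |Λ'| · |pl_j(Λ) − pl_j(Λ')| ] ≤ √( C₅ · |Λ| · log(L) · pl_j(Λ) ) and 𝔼[ |Λ'|² · (pl_j(Λ) − pl_j(Λ'))² ] ≤ C₅ · |Λ| · log(L) · pl_j(Λ). -/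
open Finset

noncomputable section

/-- The (fractional) plurality of coordinate `j` for a finite set `Λ` of
vectors: `pl_j(Λ) = (1/|Λ|)·max_α |{c ∈ Λ : c j = α}|`, with `pl_j(∅) = 0`. -/
def pl {F : Type} [Fintype F] [DecidableEq F] {n : ℕ}
    (Λ : Finset (Fin n → F)) (j : Fin n) : ℝ :=
  ((Λ.card : ℝ))⁻¹ *
    ((Finset.univ.sup (fun α : F => (Λ.filter (fun c => c j = α)).card) : ℕ) : ℝ)

private def cnt {F : Type} [DecidableEq F] {n : ℕ} (j : Fin n) (α : F)
    (S : Finset (Fin n → F)) : ℕ :=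
  (S.filter (fun c => c j = α)).card

private def Mx {F : Type} [Fintype F] [DecidableEq F] {n : ℕ} (j : Fin n)
    (S : Finset (Fin n → F)) : ℕ :=
  Finset.univ.sup (fun α => cnt j α S)

private lemma pl_eq {F : Type} [Fintype F] [DecidableEq F] {n : ℕ}
    (S : Finset (Fin n → F)) (j : Fin n) :
    pl S j = ((S.card : ℝ))⁻¹ * (Mx j S : ℝ) := rfl

private lemma cnt_le_Mx {F : Type} [Fintype F] [DecidableEq F] {n : ℕ} (j : Fin n)
    (α : F) (S : Finset (Fin n → F)) : cnt j α S ≤ Mx j S :=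
  Finset.le_sup (f := fun α => cnt j α S) (Finset.mem_univ α)

private lemma sum_ind {F : Type} [DecidableEq F] {n : ℕ} (j : Fin n) (α : F)
    (S : Finset (Fin n → F)) :
    ∑ c ∈ S, (if c j = α then (1:ℝ) else 0) = (cnt j α S : ℝ) := by
  rw [Finset.sum_boole]
  rfl

private lemma Mx_empty {F : Type} [Fintype F] [DecidableEq F] {n : ℕ} (j : Fin n) :
    Mx j (∅ : Finset (Fin n → F)) = 0 :=
  Nat.le_zero.mp (Finset.sup_le (fun α _ => by simp [cnt]))

private lemma aux_sum {ι : Type*} [DecidableEq ι] (s : Finset ι) (w : ι → ℝ) :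
    ∑ t ∈ s.powerset, ∑ c ∈ t, w c = 2 ^ s.card * ((∑ c ∈ s, w c) / 2) := by
  induction s using Finset.induction_on with
  | empty => simp
  | insert a s ha ih =>
    rw [Finset.sum_powerset_insert ha, ih, Finset.card_insert_of_notMem ha,
      Finset.sum_insert ha]
    rw [Finset.sum_congr rfl (fun t ht => Finset.sum_insert
      (fun h => ha (Finset.mem_powerset.mp ht h)))]
    rw [Finset.sum_add_distrib, ih, Finset.sum_const, Finset.card_powerset,
      nsmul_eq_mul]
    push_cast
    ring

private lemma aux_sq {ι : Type*} [DecidableEq ι] (s : Finset ι) (w : ι → ℝ) :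
    ∑ t ∈ s.powerset, (∑ c ∈ t, w c) ^ 2
      = 2 ^ s.card * (((∑ c ∈ s, w c) ^ 2 + ∑ c ∈ s, (w c) ^ 2) / 4) := by
  induction s using Finset.induction_on with
  | empty => simp
  | insert a s ha ih =>
    rw [Finset.sum_powerset_insert ha, ih, Finset.card_insert_of_notMem ha,
      Finset.sum_insert ha, Finset.sum_insert ha]
    rw [Finset.sum_congr rfl (fun t ht =>
      congrArg (· ^ 2) (Finset.sum_insert
        (fun h => ha (Finset.mem_powerset.mp ht h))))]
    have expand : ∀ t ∈ s.powerset,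
        (w a + ∑ c ∈ t, w c) ^ 2
          = (w a) ^ 2 + 2 * w a * (∑ c ∈ t, w c) + (∑ c ∈ t, w c) ^ 2 := by
      intro t _; ring
    rw [Finset.sum_congr rfl expand]
    rw [Finset.sum_add_distrib, Finset.sum_add_distrib, ih, Finset.sum_const,
      Finset.card_powerset, nsmul_eq_mul, ← Finset.mul_sum, aux_sum]
    push_cast
    ring

private lemma aux_exp {ι : Type*} [DecidableEq ι] (s : Finset ι) (w : ι → ℝ) :
    ∑ t ∈ s.powerset, Real.exp (∑ c ∈ t, w c)
      = ∏ c ∈ s, (1 + Real.exp (w c)) := by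
  induction s using Finset.induction_on with
  | empty => simp
  | insert a s ha ih =>
    rw [Finset.sum_powerset_insert ha, ih, Finset.prod_insert ha]
    rw [Finset.sum_congr rfl (fun t ht =>
      congrArg Real.exp (Finset.sum_insert
        (fun h => ha (Finset.mem_powerset.mp ht h))))]
    simp only [Real.exp_add]
    rw [← Finset.mul_sum, ih]
    ring

private lemma mgf_le {ι : Type*} [DecidableEq ι] (s : Finset ι) (w : ι → ℝ) :
    ∑ t ∈ s.powerset, Real.exp ((∑ c ∈ t, w c) - (∑ c ∈ s, w c) / 2)
      ≤ 2 ^ s.card * Real.exp (∑ c ∈ s, (w c) ^ 2 / 8) := by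
  have h1 : ∑ t ∈ s.powerset, Real.exp ((∑ c ∈ t, w c) - (∑ c ∈ s, w c) / 2)
      = (∏ c ∈ s, (1 + Real.exp (w c))) * Real.exp (-((∑ c ∈ s, w c) / 2)) := by
    rw [← aux_exp, Finset.sum_mul]
    refine Finset.sum_congr rfl fun t _ => ?_
    rw [← Real.exp_add]; ring_nf
  rw [h1]
  have h2 : (∏ c ∈ s, (1 + Real.exp (w c))) * Real.exp (-((∑ c ∈ s, w c) / 2))
      = ∏ c ∈ s, ((1 + Real.exp (w c)) * Real.exp (-(w c / 2))) := by
    rw [Finset.prod_mul_distrib, ← Real.exp_sum]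
    rw [Finset.sum_div]
    simp [Finset.sum_neg_distrib]
  rw [h2]
  have h3 : ∀ c ∈ s, (1 + Real.exp (w c)) * Real.exp (-(w c / 2))
      ≤ 2 * Real.exp ((w c) ^ 2 / 8) := by
    intro c _
    have hc : (1 + Real.exp (w c)) * Real.exp (-(w c / 2))
        = 2 * Real.cosh (w c / 2) := by
      rw [Real.cosh_eq]
      rw [mul_comm, mul_add, mul_one, ← Real.exp_add]
      have : -(w c / 2) + w c = w c / 2 := by ring
      rw [this]
      ring
    rw [hc]
    have := Real.cosh_le_exp_half_sq (w c / 2)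
    have heq : (w c / 2) ^ 2 / 2 = (w c) ^ 2 / 8 := by ring
    rw [heq] at this
    linarith
  calc ∏ c ∈ s, ((1 + Real.exp (w c)) * Real.exp (-(w c / 2)))
      ≤ ∏ c ∈ s, (2 * Real.exp ((w c) ^ 2 / 8)) := by
        refine Finset.prod_le_prod (fun c _ => ?_) h3
        positivity
    _ = 2 ^ s.card * Real.exp (∑ c ∈ s, (w c) ^ 2 / 8) := by
        rw [Finset.prod_mul_distrib, Finset.prod_const, Real.exp_sum]

private lemma exp_ptwise (z t₀ lam : ℝ) (hl : 0 < lam) (ht : 0 ≤ t₀) :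
    (max z 0) ^ 2 ≤ t₀ ^ 2 + (4 / lam ^ 2 + 2 * t₀ / lam) * Real.exp (lam * (z - t₀)) := by
  rcases le_or_gt z t₀ with h | h
  · have h1 : max z 0 ≤ t₀ := max_le h ht
    have h0 : 0 ≤ max z 0 := le_max_right z 0
    have h2 : 0 < Real.exp (lam * (z - t₀)) := Real.exp_pos _
    have h3 : 0 < 4 / lam ^ 2 + 2 * t₀ / lam := by positivity
    nlinarith
  · have hz0 : 0 ≤ z := le_trans ht h.le
    rw [max_eq_left hz0]
    set u := lam * (z - t₀) with hu
    have hu0 : 0 ≤ u := by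
      have : 0 ≤ z - t₀ := by linarith
      positivity
    have h1 : u + 1 ≤ Real.exp u := Real.add_one_le_exp u
    have h1' : u / 2 + 1 ≤ Real.exp (u / 2) := Real.add_one_le_exp _
    have h2 : Real.exp (u / 2) ^ 2 = Real.exp u := by
      rw [sq, ← Real.exp_add]
      norm_num
    have hA : u ^ 2 ≤ 4 * Real.exp u := by nlinarith [Real.exp_pos (u / 2)]
    have hB : u ≤ Real.exp u := by linarith
    have key : u ^ 2 + 2 * t₀ * lam * u
        ≤ 4 * Real.exp u + 2 * t₀ * lam * Real.exp u := by
      have h5 : 0 ≤ 2 * t₀ * lam := by positivity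
      nlinarith [mul_le_mul_of_nonneg_left hB h5]
    have hul : u = lam * (z - t₀) := hu
    have hll : (0:ℝ) < lam ^ 2 := by positivity
    calc z ^ 2 = t₀ ^ 2 + lam ^ 2 * (z ^ 2 - t₀ ^ 2) / lam ^ 2 := by
          field_simp
          ring
      _ ≤ t₀ ^ 2 + (4 * Real.exp u + 2 * t₀ * lam * Real.exp u) / lam ^ 2 := by
          have heq : lam ^ 2 * (z ^ 2 - t₀ ^ 2) = u ^ 2 + 2 * t₀ * lam * u := by
            rw [hul]; ring
          rw [heq]
          exact add_le_add_right ((div_le_div_iff_of_pos_right hll).mpr key) _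
      _ = t₀ ^ 2 + (4 / lam ^ 2 + 2 * t₀ / lam) * Real.exp u := by
          field_simp

set_option maxHeartbeats 2000000 in
private lemma key_bound {F : Type} [Fintype F] [DecidableEq F] {n : ℕ}
    (L : ℕ) (hL : 2 ≤ L) (Λ : Finset (Fin n → F)) (hΛ : Λ.Nonempty)
    (hcard : Λ.card ≤ L) (j : Fin n) :
    ((2 : ℝ) ^ Λ.card)⁻¹ *
        ∑ S ∈ Λ.powerset, (S.card : ℝ) ^ 2 * (pl Λ j - pl S j) ^ 2
      ≤ 100 * Λ.card * Real.logb 2 L * pl Λ j := by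
  classical
  obtain ⟨c₀, hc₀⟩ := hΛ
  have hF : Nonempty F := ⟨c₀ j⟩
  have hm0 : 0 < Λ.card := Finset.card_pos.mpr ⟨c₀, hc₀⟩
  have hm0' : (0:ℝ) < Λ.card := by exact_mod_cast hm0
  have hL0 : (0:ℝ) < L := by positivity
  have hL2 : (2:ℝ) ≤ L := by exact_mod_cast hL
  -- basic count facts
  have hM1 : 1 ≤ Mx j Λ := by
    have h1 : 1 ≤ cnt j (c₀ j) Λ := by
      have : c₀ ∈ Λ.filter (fun c => c j = c₀ j) := Finset.mem_filter.mpr ⟨hc₀, rfl⟩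
      exact Finset.card_pos.mpr ⟨c₀, this⟩
    exact le_trans h1 (cnt_le_Mx j _ Λ)
  have hMm : Mx j Λ ≤ Λ.card := Finset.sup_le fun α _ => Finset.card_filter_le _ _
  set Mr : ℝ := (Mx j Λ : ℝ) with hMrdef
  have hMr1 : (1:ℝ) ≤ Mr := by rw [hMrdef]; exact_mod_cast hM1
  have hMr0 : (0:ℝ) < Mr := by linarith
  have hMrm : Mr ≤ (Λ.card : ℝ) := by rw [hMrdef]; exact_mod_cast hMm
  set p : ℝ := pl Λ j with hpdef
  have hpM : (Λ.card : ℝ) * p = Mr := by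
    rw [hpdef, pl_eq]
    field_simp
    exact hMrdef.symm
  have hp0 : 0 ≤ p := by
    rw [hpdef, pl_eq]
    positivity
  have hp1 : p ≤ 1 := by nlinarith
  -- parameters
  set R : ℝ := Real.log L with hRdef
  have hl2a : (0.6931471803 : ℝ) < Real.log 2 := Real.log_two_gt_d9
  have hl2b : Real.log 2 < 0.6931471808 := Real.log_two_lt_d9
  have hR : Real.log 2 ≤ R := by
    rw [hRdef]
    exact Real.log_le_log (by norm_num) hL2
  have hR0 : (0:ℝ) < R := by linarith
  set lam : ℝ := 2 * Real.sqrt (R / Mr) with hlamdef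
  set t₀ : ℝ := Real.sqrt (Mr * R) with ht₀def
  have hsR : Real.sqrt R ^ 2 = R := Real.sq_sqrt hR0.le
  have hsM : Real.sqrt Mr ^ 2 = Mr := Real.sq_sqrt hMr0.le
  have hsR0 : 0 < Real.sqrt R := Real.sqrt_pos.mpr hR0
  have hsM0 : 0 < Real.sqrt Mr := Real.sqrt_pos.mpr hMr0
  have hlamEq : lam = 2 * (Real.sqrt R / Real.sqrt Mr) := by
    rw [hlamdef, Real.sqrt_div hR0.le]
  have ht₀Eq : t₀ = Real.sqrt Mr * Real.sqrt R := by
    rw [ht₀def, Real.sqrt_mul hMr0.le]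
  have hlam0 : 0 < lam := by rw [hlamEq]; positivity
  have ht₀0 : 0 ≤ t₀ := Real.sqrt_nonneg _
  have ht₀sq : t₀ ^ 2 = Mr * R := by rw [ht₀Eq, mul_pow, hsM, hsR]
  have hlamsq : lam ^ 2 = 4 * R / Mr := by
    rw [hlamEq, mul_pow, div_pow, hsR, hsM]
    ring
  have hlt₀ : lam * t₀ = 2 * R := by
    rw [hlamEq, ht₀Eq]
    field_simp
    linear_combination hsR
  have hCoef : 4 / lam ^ 2 + 2 * t₀ / lam = Mr / R + Mr := by
    have e1 : 4 / lam ^ 2 = Mr / R := by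
      rw [hlamsq]
      field_simp
    have e2 : 2 * t₀ / lam = Mr := by
      rw [ht₀Eq, hlamEq]
      rw [div_eq_iff (by positivity)]
      field_simp
      linear_combination hsM
    rw [e1, e2]
  -- weight function
  set V : F → (Fin n → F) → ℝ := fun α c => (if c j = α then (1:ℝ) else 0) - p with hV
  have sumv : ∀ (α : F) (S : Finset (Fin n → F)),
      ∑ c ∈ S, V α c = (cnt j α S : ℝ) - S.card * p := by
    intro α S
    rw [hV]
    rw [Finset.sum_sub_distrib, sum_ind, Finset.sum_const, nsmul_eq_mul]
  have sumv2 : ∀ α : F, ∑ c ∈ Λ, (V α c) ^ 2 ≤ 2 * Mr := by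
    intro α
    have hexp : ∀ c : Fin n → F, (V α c) ^ 2
        = (if c j = α then (1:ℝ) else 0) * (1 - 2 * p) + p ^ 2 := by
      intro c
      rw [hV]
      by_cases h : c j = α <;> simp [h] <;> ring
    rw [Finset.sum_congr rfl (fun c _ => hexp c), Finset.sum_add_distrib,
      ← Finset.sum_mul, sum_ind, Finset.sum_const, nsmul_eq_mul]
    have h1 : (cnt j α Λ : ℝ) ≤ Mr := by
      rw [hMrdef]
      exact_mod_cast cnt_le_Mx j α Λ
    have h2 : (0:ℝ) ≤ (cnt j α Λ : ℝ) := Nat.cast_nonneg _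
    nlinarith [mul_nonneg h2 hp0, mul_nonneg hMr0.le hp0, mul_le_of_le_one_right hMr0.le hp1]
  -- MGF bound
  have hmgf : ∀ α : F,
      ∑ S ∈ Λ.powerset, Real.exp ((∑ c ∈ S, lam * V α c)
          - (∑ c ∈ Λ, lam * V α c) / 2)
        ≤ 2 ^ Λ.card * Real.exp R := by
    intro α
    refine le_trans (mgf_le Λ _) ?_
    have h1 : ∑ c ∈ Λ, (lam * V α c) ^ 2 / 8 ≤ R := by
      rw [← Finset.sum_div]
      rw [Finset.sum_congr rfl (fun c (_ : c ∈ Λ) =>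
        show (lam * V α c) ^ 2 = lam ^ 2 * (V α c) ^ 2 by ring)]
      rw [← Finset.mul_sum]
      have h2 := sumv2 α
      have h3 : lam ^ 2 * (∑ c ∈ Λ, (V α c) ^ 2) ≤ lam ^ 2 * (2 * Mr) :=
        mul_le_mul_of_nonneg_left h2 (sq_nonneg _)
      have h4 : lam ^ 2 * (2 * Mr) / 8 = R := by
        rw [hlamsq]
        field_simp
        ring
      calc lam ^ 2 * (∑ c ∈ Λ, (V α c) ^ 2) / 8 ≤ lam ^ 2 * (2 * Mr) / 8 := by linarith
        _ = R := h4
    have h5 : (0:ℝ) ≤ 2 ^ Λ.card := by positivity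
    exact mul_le_mul_of_nonneg_left (Real.exp_le_exp.mpr h1) h5
  -- the exponential term
  set E : F → Finset (Fin n → F) → ℝ := fun α S =>
    Real.exp ((∑ c ∈ S, lam * V α c) - (∑ c ∈ Λ, lam * V α c) / 2 - lam * t₀) with hE
  have hexpval : Real.exp R * Real.exp (-(lam * t₀)) = (L:ℝ)⁻¹ := by
    rw [← Real.exp_add, hlt₀, show R + -(2 * R) = -R by ring, Real.exp_neg, hRdef,
      Real.exp_log hL0]
  have hEsum : ∀ α : F, ∑ S ∈ Λ.powerset, E α S ≤ 2 ^ Λ.card * (L:ℝ)⁻¹ := by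
    intro α
    have h1 : ∀ S : Finset (Fin n → F), E α S
        = Real.exp ((∑ c ∈ S, lam * V α c) - (∑ c ∈ Λ, lam * V α c) / 2)
          * Real.exp (-(lam * t₀)) := by
      intro S
      simp only [hE]
      rw [← Real.exp_add]
      congr 1
    rw [Finset.sum_congr rfl (fun S _ => h1 S), ← Finset.sum_mul]
    calc (∑ S ∈ Λ.powerset, Real.exp ((∑ c ∈ S, lam * V α c)
            - (∑ c ∈ Λ, lam * V α c) / 2)) * Real.exp (-(lam * t₀))
        ≤ (2 ^ Λ.card * Real.exp R) * Real.exp (-(lam * t₀)) :=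
          mul_le_mul_of_nonneg_right (hmgf α) (Real.exp_pos _).le
      _ = 2 ^ Λ.card * (L:ℝ)⁻¹ := by rw [mul_assoc, hexpval]
  have hEpos : ∀ α S, 0 < E α S := fun α S => by rw [hE]; exact Real.exp_pos _
  -- values attained in coordinate j
  set vals : Finset F := Λ.image (fun c => c j) with hvals
  have hvalsL : (vals.card : ℝ) ≤ L := by
    exact_mod_cast le_trans Finset.card_image_le hcard
  have hcoef0 : (0:ℝ) ≤ Mr / R + Mr := by positivity
  -- the plurality symbol
  obtain ⟨αs, -, hαs⟩ := Finset.exists_mem_eq_sup (Finset.univ : Finset F)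
    Finset.univ_nonempty (fun α => cnt j α Λ)
  -- summand identity
  have gdef : ∀ S ∈ Λ.powerset,
      (S.card : ℝ) * (p - pl S j) = (S.card : ℝ) * p - (Mx j S : ℝ) := by
    intro S _
    rcases Finset.eq_empty_or_nonempty S with rfl | hSne
    · simp [Mx_empty]
    · have hc : (S.card : ℝ) ≠ 0 := by
        have := Finset.card_pos.mpr hSne
        positivity
      rw [pl_eq]
      field_simp
  clear_value Mr p R lam t₀ V E vals
  -- pointwise bound
  have ptw : ∀ S ∈ Λ.powerset,
      (S.card : ℝ) ^ 2 * (p - pl S j) ^ 2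
        ≤ (∑ c ∈ S, (- V αs c)) ^ 2
          + (t₀ ^ 2 + ∑ α ∈ vals, (Mr / R + Mr) * E α S) := by
    intro S hS
    have hSsub := Finset.mem_powerset.mp hS
    have hsq : (S.card : ℝ) ^ 2 * (p - pl S j) ^ 2
        = ((S.card : ℝ) * p - (Mx j S : ℝ)) ^ 2 := by
      rw [← gdef S hS, mul_pow]
    rw [hsq]
    set G : ℝ := (S.card : ℝ) * p - (Mx j S : ℝ) with hG
    clear_value G
    -- upper side
    have hU : G ≤ ∑ c ∈ S, (- V αs c) := by
      have h1 : ∑ c ∈ S, (- V αs c) = (S.card : ℝ) * p - (cnt j αs S : ℝ) := by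
        rw [Finset.sum_neg_distrib, sumv]
        ring
      have h2 : (cnt j αs S : ℝ) ≤ (Mx j S : ℝ) := by exact_mod_cast cnt_le_Mx j αs S
      rw [hG, h1]
      linarith only [h2]
    -- terms are nonnegative
    have hterm0 : ∀ α ∈ vals, 0 ≤ (Mr / R + Mr) * E α S :=
      fun α _ => mul_nonneg hcoef0 (hEpos α S).le
    have hsum0 : (0:ℝ) ≤ ∑ α ∈ vals, (Mr / R + Mr) * E α S := Finset.sum_nonneg hterm0
    -- lower side
    have hneg : (max (-G) 0) ^ 2 ≤ t₀ ^ 2 + ∑ α ∈ vals, (Mr / R + Mr) * E α S := by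
      rcases Nat.eq_zero_or_pos (Mx j S) with h0 | hpos
      · have hng : -G ≤ 0 := by
          rw [hG, h0]
          have h9 := mul_nonneg (Nat.cast_nonneg (α := ℝ) S.card) hp0
          push_cast
          linarith only [h9]
        rw [max_eq_right hng]
        rw [show ((0:ℝ)) ^ 2 = 0 by norm_num]
        exact add_nonneg (sq_nonneg t₀) hsum0
      · obtain ⟨β, -, hβ⟩ := Finset.exists_mem_eq_sup (Finset.univ : Finset F)
          Finset.univ_nonempty (fun α => cnt j α S)
        have hβMx : Mx j S = cnt j β S := hβ
        have hβpos : 0 < cnt j β S := by rw [← hβMx]; exact hpos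
        obtain ⟨c, hcf⟩ := Finset.card_pos.mp hβpos
        have hcmem := Finset.mem_filter.mp hcf
        have hβvals : β ∈ vals := by
          rw [hvals]
          exact Finset.mem_image.mpr ⟨c, hSsub hcmem.1, hcmem.2⟩
        have hZ : -G ≤ (∑ c ∈ S, V β c) - (∑ c ∈ Λ, V β c) / 2 := by
          have h1 := sumv β S
          have h2 := sumv β Λ
          have h3 : (cnt j β Λ : ℝ) ≤ Mr := by
            rw [hMrdef]
            exact_mod_cast cnt_le_Mx j β Λ
          have h4 : (Mx j S : ℝ) = (cnt j β S : ℝ) := by exact_mod_cast hβMx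
          rw [hG, h1, h2, hpM, h4]
          linarith only [h3]
        have hmax : max (-G) 0 ≤ max ((∑ c ∈ S, V β c) - (∑ c ∈ Λ, V β c) / 2) 0 :=
          max_le_max hZ le_rfl
        have hsq2 : (max (-G) 0) ^ 2
            ≤ (max ((∑ c ∈ S, V β c) - (∑ c ∈ Λ, V β c) / 2) 0) ^ 2 :=
          pow_le_pow_left₀ (le_max_right _ _) hmax 2
        have hpt := exp_ptwise ((∑ c ∈ S, V β c) - (∑ c ∈ Λ, V β c) / 2) t₀ lam hlam0 ht₀0
        rw [hCoef] at hpt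
        have hEeq : Real.exp (lam * ((∑ c ∈ S, V β c) - (∑ c ∈ Λ, V β c) / 2 - t₀))
            = E β S := by
          simp only [hE]
          congr 1
          rw [← Finset.mul_sum, ← Finset.mul_sum]
          ring
        rw [hEeq] at hpt
        have hsingle : (Mr / R + Mr) * E β S ≤ ∑ α ∈ vals, (Mr / R + Mr) * E α S :=
          Finset.single_le_sum hterm0 hβvals
        linarith only [hsq2, hpt, hsingle]
    -- combine
    rcases le_or_gt 0 G with h | h
    · have h1 : G ^ 2 ≤ (∑ c ∈ S, (- V αs c)) ^ 2 := pow_le_pow_left₀ h hU 2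
      linarith only [h1, hsum0, sq_nonneg t₀]
    · have h1 : G ^ 2 = (max (-G) 0) ^ 2 := by
        rw [max_eq_left (by linarith only [h])]
        ring
      rw [h1]
      linarith only [hneg, sq_nonneg (∑ c ∈ S, (- V αs c))]
  -- summation
  have hMxαs : Mx j Λ = cnt j αs Λ := hαs
  have sumU : ∑ S ∈ Λ.powerset, (∑ c ∈ S, (- V αs c)) ^ 2 ≤ 2 ^ Λ.card * (Mr / 2) := by
    rw [aux_sq]
    have e0 : ∑ c ∈ Λ, (- V αs c) = 0 := by
      rw [Finset.sum_neg_distrib, sumv, hpM]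
      have : (cnt j αs Λ : ℝ) = Mr := by rw [hMrdef]; exact_mod_cast hMxαs.symm
      rw [this]
      ring
    have e1 : ∑ c ∈ Λ, (- V αs c) ^ 2 ≤ 2 * Mr := by
      have : ∀ c ∈ Λ, (- V αs c) ^ 2 = (V αs c) ^ 2 := fun c _ => by ring
      rw [Finset.sum_congr rfl this]
      exact sumv2 αs
    rw [e0]
    have h2m : (0:ℝ) ≤ 2 ^ Λ.card := by positivity
    calc (2:ℝ) ^ Λ.card * ((0 ^ 2 + ∑ c ∈ Λ, (- V αs c) ^ 2) / 4)
        ≤ 2 ^ Λ.card * ((0 ^ 2 + 2 * Mr) / 4) := by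
          have : (0:ℝ) ^ 2 + ∑ c ∈ Λ, (- V αs c) ^ 2 ≤ 0 ^ 2 + 2 * Mr := by
            linarith only [e1]
          exact mul_le_mul_of_nonneg_left (by linarith only [this]) h2m
      _ = 2 ^ Λ.card * (Mr / 2) := by ring
  have sumE : ∑ S ∈ Λ.powerset, ∑ α ∈ vals, (Mr / R + Mr) * E α S
      ≤ 2 ^ Λ.card * (Mr / R + Mr) := by
    rw [Finset.sum_comm]
    have each : ∀ α ∈ vals, ∑ S ∈ Λ.powerset, (Mr / R + Mr) * E α S
        ≤ (Mr / R + Mr) * (2 ^ Λ.card * (L:ℝ)⁻¹) := by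
      intro α _
      rw [← Finset.mul_sum]
      exact mul_le_mul_of_nonneg_left (hEsum α) hcoef0
    have hfac : (0:ℝ) ≤ (Mr / R + Mr) * (2 ^ Λ.card * (L:ℝ)⁻¹) := by
      apply mul_nonneg hcoef0
      positivity
    calc ∑ α ∈ vals, ∑ S ∈ Λ.powerset, (Mr / R + Mr) * E α S
        ≤ ∑ α ∈ vals, (Mr / R + Mr) * (2 ^ Λ.card * (L:ℝ)⁻¹) := Finset.sum_le_sum each
      _ = (vals.card : ℝ) * ((Mr / R + Mr) * (2 ^ Λ.card * (L:ℝ)⁻¹)) := by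
          rw [Finset.sum_const, nsmul_eq_mul]
      _ ≤ (L:ℝ) * ((Mr / R + Mr) * (2 ^ Λ.card * (L:ℝ)⁻¹)) :=
          mul_le_mul_of_nonneg_right hvalsL hfac
      _ = 2 ^ Λ.card * (Mr / R + Mr) := by
          field_simp
  have hinv0 : (0:ℝ) ≤ ((2:ℝ) ^ Λ.card)⁻¹ := by positivity
  have h2mne : ((2:ℝ) ^ Λ.card) ≠ 0 := by positivity
  have main : ((2 : ℝ) ^ Λ.card)⁻¹ *
      ∑ S ∈ Λ.powerset, (S.card : ℝ) ^ 2 * (p - pl S j) ^ 2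
        ≤ Mr / 2 + Mr * R + (Mr / R + Mr) := by
    have step1 : ∑ S ∈ Λ.powerset, (S.card : ℝ) ^ 2 * (p - pl S j) ^ 2
        ≤ ∑ S ∈ Λ.powerset, ((∑ c ∈ S, (- V αs c)) ^ 2
            + (t₀ ^ 2 + ∑ α ∈ vals, (Mr / R + Mr) * E α S)) := Finset.sum_le_sum ptw
    have step2 : ∑ S ∈ Λ.powerset, ((∑ c ∈ S, (- V αs c)) ^ 2
            + (t₀ ^ 2 + ∑ α ∈ vals, (Mr / R + Mr) * E α S))
        = (∑ S ∈ Λ.powerset, (∑ c ∈ S, (- V αs c)) ^ 2)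
          + ((2:ℝ) ^ Λ.card * (Mr * R)
            + ∑ S ∈ Λ.powerset, ∑ α ∈ vals, (Mr / R + Mr) * E α S) := by
      rw [Finset.sum_add_distrib, Finset.sum_add_distrib, Finset.sum_const,
        Finset.card_powerset, nsmul_eq_mul, ht₀sq]
      push_cast
      ring
    have step3 : ∑ S ∈ Λ.powerset, (S.card : ℝ) ^ 2 * (p - pl S j) ^ 2
        ≤ 2 ^ Λ.card * (Mr / 2 + Mr * R + (Mr / R + Mr)) := by
      rw [step2] at step1
      have := add_le_add (add_le_add sumU (le_refl ((2:ℝ) ^ Λ.card * (Mr * R)))) sumE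
      calc ∑ S ∈ Λ.powerset, (S.card : ℝ) ^ 2 * (p - pl S j) ^ 2
          ≤ (2 ^ Λ.card * (Mr / 2) + 2 ^ Λ.card * (Mr * R)) + 2 ^ Λ.card * (Mr / R + Mr) := by
            linarith only [step1, sumU, sumE]
        _ = 2 ^ Λ.card * (Mr / 2 + Mr * R + (Mr / R + Mr)) := by ring
    calc ((2 : ℝ) ^ Λ.card)⁻¹ * ∑ S ∈ Λ.powerset, (S.card : ℝ) ^ 2 * (p - pl S j) ^ 2
        ≤ ((2 : ℝ) ^ Λ.card)⁻¹ * (2 ^ Λ.card * (Mr / 2 + Mr * R + (Mr / R + Mr))) :=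
          mul_le_mul_of_nonneg_left step3 hinv0
      _ = Mr / 2 + Mr * R + (Mr / R + Mr) := by
          field_simp
  -- final numeric bound
  have hl2pos : (0:ℝ) < Real.log 2 := by linarith only [hl2a]
  have k1 : Mr / R ≤ 2 * Mr := by
    rw [div_le_iff₀ hR0]
    nlinarith only [hR, hMr0, hl2a, mul_le_mul_of_nonneg_left hR (show (0:ℝ) ≤ 2 * Mr by linarith only [hMr0]), mul_lt_mul_of_pos_left hl2a (show (0:ℝ) < 2 * Mr by linarith only [hMr0])]
  have k2 : R ≤ R / Real.log 2 := by
    rw [le_div_iff₀ hl2pos]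
    nlinarith only [mul_le_mul_of_nonneg_left hl2b.le hR0.le, hR0]
  have A : Mr * Real.log 2 ≤ Mr * R := mul_le_mul_of_nonneg_left hR hMr0.le
  have B : Mr * 0.6931471803 < Mr * Real.log 2 := by
    exact mul_lt_mul_of_pos_left hl2a hMr0
  have k3 : Mr / 2 + Mr * R + (Mr / R + Mr) ≤ 100 * (Mr * R) := by
    linarith only [k1, A, B, hMr0]
  have k4 : 100 * (Mr * R) ≤ 100 * Λ.card * Real.logb 2 L * p := by
    have hlogb : Real.logb 2 (L:ℝ) = R / Real.log 2 := by rw [Real.logb, hRdef]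
    have h5 : 100 * (Λ.card:ℝ) * Real.logb 2 L * p = 100 * Mr * (R / Real.log 2) := by
      rw [hlogb, ← hpM]
      ring
    rw [h5]
    have h6 := mul_le_mul_of_nonneg_left k2 (show (0:ℝ) ≤ 100 * Mr by linarith only [hMr0])
    linarith only [h6]
  exact le_trans main (le_trans k3 k4)

/-- Lemma 6.2: if `Λ'` is a uniformly random half-density
subset of `Λ` (each element kept independently with probability 1/2, so the
expectation is the average over all `2^|Λ|` subsets), then for every
coordinate `j` the first and second moments of `|Λ'|·(pl_j(Λ) − pl_j(Λ'))`
are bounded by `√(C₅·|Λ|·log L·pl_j(Λ))` and `C₅·|Λ|·log L·pl_j(Λ)`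
respectively. -/
theorem stmt_11 :
    ∃ C₅ : ℝ, ∀ {F : Type} [Field F] [Fintype F] [DecidableEq F],
      ∀ n : ℕ, 1 ≤ n → ∀ L : ℕ, 2 ≤ L →
      ∀ Λ : Finset (Fin n → F), Λ.Nonempty → Λ.card ≤ L →
      ∀ j : Fin n,
        (((2 : ℝ) ^ Λ.card)⁻¹ *
            ∑ Λ' ∈ Λ.powerset, (Λ'.card : ℝ) * |pl Λ j - pl Λ' j|
          ≤ Real.sqrt (C₅ * Λ.card * Real.logb 2 L * pl Λ j)) ∧
        (((2 : ℝ) ^ Λ.card)⁻¹ *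
            ∑ Λ' ∈ Λ.powerset, (Λ'.card : ℝ) ^ 2 * (pl Λ j - pl Λ' j) ^ 2
          ≤ C₅ * Λ.card * Real.logb 2 L * pl Λ j) := by
  refine ⟨100, ?_⟩
  intro F _ _ _ n hn L hL Λ hΛ hcard j
  have key := key_bound L hL Λ hΛ hcard j
  refine ⟨?_, key⟩
  set w : ℝ := ((2:ℝ) ^ Λ.card)⁻¹ with hw
  have hw0 : (0:ℝ) ≤ w := by rw [hw]; positivity
  have hE1 : w * ∑ S ∈ Λ.powerset, (S.card:ℝ) * |pl Λ j - pl S j|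
      = ∑ S ∈ Λ.powerset,
          Real.sqrt w * (Real.sqrt w * ((S.card:ℝ) * |pl Λ j - pl S j|)) := by
    rw [Finset.mul_sum]
    refine Finset.sum_congr rfl fun S _ => ?_
    rw [show Real.sqrt w * (Real.sqrt w * ((S.card:ℝ) * |pl Λ j - pl S j|))
        = (Real.sqrt w * Real.sqrt w) * ((S.card:ℝ) * |pl Λ j - pl S j|) from by ring,
      Real.mul_self_sqrt hw0]
  have hCS := Finset.sum_mul_sq_le_sq_mul_sq Λ.powerset (fun _ => Real.sqrt w)
    (fun S => Real.sqrt w * ((S.card:ℝ) * |pl Λ j - pl S j|))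
  have hsum1 : ∑ _S ∈ Λ.powerset, (Real.sqrt w) ^ 2 = 1 := by
    rw [Finset.sum_const, nsmul_eq_mul, Real.sq_sqrt hw0, Finset.card_powerset, hw]
    push_cast
    field_simp
  have hsum2 : ∑ S ∈ Λ.powerset, (Real.sqrt w * ((S.card:ℝ) * |pl Λ j - pl S j|)) ^ 2
      = w * ∑ S ∈ Λ.powerset, (S.card:ℝ) ^ 2 * (pl Λ j - pl S j) ^ 2 := by
    rw [Finset.mul_sum]
    refine Finset.sum_congr rfl fun S _ => ?_
    rw [mul_pow, Real.sq_sqrt hw0, mul_pow, sq_abs]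
  have hE1nn : 0 ≤ w * ∑ S ∈ Λ.powerset, (S.card:ℝ) * |pl Λ j - pl S j| :=
    mul_nonneg hw0 (Finset.sum_nonneg fun S _ =>
      mul_nonneg (Nat.cast_nonneg _) (abs_nonneg _))
  have hfin : (w * ∑ S ∈ Λ.powerset, (S.card:ℝ) * |pl Λ j - pl S j|) ^ 2
      ≤ 100 * Λ.card * Real.logb 2 L * pl Λ j := by
    rw [hE1]
    calc (∑ S ∈ Λ.powerset,
            Real.sqrt w * (Real.sqrt w * ((S.card:ℝ) * |pl Λ j - pl S j|))) ^ 2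
        ≤ (∑ _S ∈ Λ.powerset, (Real.sqrt w) ^ 2)
            * ∑ S ∈ Λ.powerset, (Real.sqrt w * ((S.card:ℝ) * |pl Λ j - pl S j|)) ^ 2 := hCS
      _ = w * ∑ S ∈ Λ.powerset, (S.card:ℝ) ^ 2 * (pl Λ j - pl S j) ^ 2 := by
          rw [hsum1, hsum2, one_mul]
      _ ≤ 100 * Λ.card * Real.logb 2 L * pl Λ j := key
  calc w * ∑ S ∈ Λ.powerset, (S.card:ℝ) * |pl Λ j - pl S j|
      = Real.sqrt ((w * ∑ S ∈ Λ.powerset, (S.card:ℝ) * |pl Λ j - pl S j|) ^ 2) :=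
        (Real.sqrt_sq hE1nn).symm
    _ ≤ Real.sqrt (100 * Λ.card * Real.logb 2 L * pl Λ j) := Real.sqrt_le_sqrt hfin
end
end

section
/- Let q be a prime power, n ≥ 1, and L ≥ 1 an integer. Let Λ be a finite nonempty set of vectors in 𝔽_q^n with |Λ| ≤ L, and let Λ' ⊆ Λ be a random subset obtained by including each element of Λ independently with probability 1/2. Then for every coordinate j ∈ {1,…,n} and every v ≥ 0: Pr[ |Λ'|² · (pl_j(Λ) − pl_j(Λ'))² > v ] ≤ 4L · exp( −v / (2 · pl_j(Λ) · |Λ|) ). -/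
open Finset

noncomputable section

lemma card_mul_pl {F : Type} [Fintype F] [DecidableEq F] {n : ℕ}
    (S : Finset (Fin n → F)) (j : Fin n) :
    (S.card : ℝ) * pl S j
      = ((Finset.univ.sup (fun α : F => (S.filter (fun c => c j = α)).card) : ℕ) : ℝ) := by
  by_cases hS : S.card = 0
  · have h : S = ∅ := Finset.card_eq_zero.mp hS
    subst h
    simp [pl]
    have : (Finset.univ.sup fun _ : F => (0:ℕ)) = 0 :=
      Nat.le_zero.mp (Finset.sup_le fun _ _ => le_rfl)
    rw [this]
    simp
  · rw [pl, mul_inv_cancel_left₀ (by exact_mod_cast hS)]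

lemma chernoff {ι : Type} [DecidableEq ι] (s : Finset ι) (w : ι → ℝ) (t B : ℝ)
    (ht : 0 ≤ t) (hB : 0 < B) (hw : ∑ i ∈ s, w i ^ 2 ≤ B) :
    ((s.powerset.filter (fun u => (∑ i ∈ s, w i) / 2 + t < ∑ i ∈ u, w i)).card : ℝ)
      ≤ 2 ^ s.card * Real.exp (-2 * t ^ 2 / B) := by
  set lam : ℝ := 4 * t / B with hlam
  have hlam0 : 0 ≤ lam := by positivity
  set μ : ℝ := (∑ i ∈ s, w i) / 2 with hμ
  have step1 : ((s.powerset.filter (fun u => μ + t < ∑ i ∈ u, w i)).card : ℝ)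
      * Real.exp (lam * (μ + t)) ≤ ∑ u ∈ s.powerset, Real.exp (lam * ∑ i ∈ u, w i) := by
    calc ((s.powerset.filter (fun u => μ + t < ∑ i ∈ u, w i)).card : ℝ)
        * Real.exp (lam * (μ + t))
        ≤ ∑ u ∈ s.powerset.filter (fun u => μ + t < ∑ i ∈ u, w i),
            Real.exp (lam * ∑ i ∈ u, w i) := by
          rw [← nsmul_eq_mul]
          apply Finset.card_nsmul_le_sum
          intro u hu
          rw [Finset.mem_filter] at hu
          exact Real.exp_le_exp.2 (mul_le_mul_of_nonneg_left hu.2.le hlam0)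
      _ ≤ ∑ u ∈ s.powerset, Real.exp (lam * ∑ i ∈ u, w i) := by
          apply Finset.sum_le_sum_of_subset_of_nonneg (Finset.filter_subset _ _)
          intro u _ _
          positivity
  have step2 : ∑ u ∈ s.powerset, Real.exp (lam * ∑ i ∈ u, w i)
      = ∏ i ∈ s, (Real.exp (lam * w i) + 1) := by
    rw [Finset.prod_add]
    simp only [Finset.prod_const_one, mul_one]
    apply Finset.sum_congr rfl
    intro u _
    rw [Finset.mul_sum, Real.exp_sum]
  have step3 : ∏ i ∈ s, (Real.exp (lam * w i) + 1)
      ≤ 2 ^ s.card * Real.exp (lam * (∑ i ∈ s, w i) / 2 + lam ^ 2 * B / 8) := by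
    have key : ∀ i ∈ s, Real.exp (lam * w i) + 1
        ≤ 2 * Real.exp (lam * w i / 2 + (lam * w i) ^ 2 / 8) := by
      intro i _
      have h := Real.cosh_le_exp_half_sq (lam * w i / 2)
      rw [Real.cosh_eq] at h
      have : Real.exp (lam * w i) + 1
          = 2 * Real.exp (lam * w i / 2) * ((Real.exp (lam * w i / 2) + Real.exp (-(lam * w i / 2))) / 2) := by
        have e1 : 2 * Real.exp (lam * w i / 2) * ((Real.exp (lam * w i / 2) + Real.exp (-(lam * w i / 2))) / 2)
            = Real.exp (lam * w i / 2) * Real.exp (lam * w i / 2)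
              + Real.exp (lam * w i / 2) * Real.exp (-(lam * w i / 2)) := by ring
        rw [e1, ← Real.exp_add, ← Real.exp_add]
        norm_num
      rw [this]
      calc 2 * Real.exp (lam * w i / 2) * ((Real.exp (lam * w i / 2) + Real.exp (-(lam * w i / 2))) / 2)
          ≤ 2 * Real.exp (lam * w i / 2) * Real.exp ((lam * w i / 2) ^ 2 / 2) := by
            apply mul_le_mul_of_nonneg_left h (by positivity)
        _ = 2 * Real.exp (lam * w i / 2 + (lam * w i) ^ 2 / 8) := by
            rw [mul_assoc, ← Real.exp_add]
            ring_nf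
    calc ∏ i ∈ s, (Real.exp (lam * w i) + 1)
        ≤ ∏ i ∈ s, (2 * Real.exp (lam * w i / 2 + (lam * w i) ^ 2 / 8)) := by
          apply Finset.prod_le_prod (fun i _ => by positivity) key
      _ = 2 ^ s.card * Real.exp (∑ i ∈ s, (lam * w i / 2 + (lam * w i) ^ 2 / 8)) := by
          rw [Finset.prod_mul_distrib, Finset.prod_const, ← Real.exp_sum]
      _ ≤ 2 ^ s.card * Real.exp (lam * (∑ i ∈ s, w i) / 2 + lam ^ 2 * B / 8) := by
          apply mul_le_mul_of_nonneg_left _ (by positivity)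
          apply Real.exp_le_exp.2
          rw [Finset.sum_add_distrib]
          apply add_le_add
          · exact le_of_eq (by rw [Finset.mul_sum, Finset.sum_div])
          · have : ∑ i ∈ s, (lam * w i) ^ 2 / 8 = lam ^ 2 * (∑ i ∈ s, w i ^ 2) / 8 := by
              rw [Finset.mul_sum, Finset.sum_div]
              apply Finset.sum_congr rfl
              intro i _; ring
            rw [this]
            have := mul_le_mul_of_nonneg_left hw (by positivity : (0:ℝ) ≤ lam ^ 2)
            linarith
  have hexp : Real.exp (lam * (μ + t)) > 0 := Real.exp_pos _
  have combined : ((s.powerset.filter (fun u => μ + t < ∑ i ∈ u, w i)).card : ℝ)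
      ≤ 2 ^ s.card * Real.exp (lam * (∑ i ∈ s, w i) / 2 + lam ^ 2 * B / 8)
        / Real.exp (lam * (μ + t)) := by
    rw [le_div_iff₀ hexp]
    calc _ ≤ ∑ u ∈ s.powerset, Real.exp (lam * ∑ i ∈ u, w i) := step1
      _ = ∏ i ∈ s, (Real.exp (lam * w i) + 1) := step2
      _ ≤ _ := step3
  refine combined.trans (le_of_eq ?_)
  rw [mul_div_assoc, ← Real.exp_sub]
  congr 1
  have hB' : (B:ℝ) ≠ 0 := ne_of_gt hB
  rw [hμ, hlam]
  field_simp
  ring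

/-- tail bound from the proof of Lemma 6.2: if `Λ'` is a
uniformly random half-density subset of `Λ` (probability written as a
normalized count over all `2^|Λ|` subsets), then for every coordinate `j` and
every `v ≥ 0`,
`Pr[|Λ'|²(pl_j(Λ) − pl_j(Λ'))² > v] ≤ 4L·exp(−v/(2·pl_j(Λ)·|Λ|))`. -/
theorem stmt_12
    {F : Type} [Field F] [Fintype F] [DecidableEq F]
    (n : ℕ) (hn : 1 ≤ n) (L : ℕ) (hL : 1 ≤ L)
    (Λ : Finset (Fin n → F)) (hne : Λ.Nonempty) (hcard : Λ.card ≤ L)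
    (j : Fin n) (v : ℝ) (hv : 0 ≤ v) :
    ((Λ.powerset.filter (fun Λ' =>
        v < (Λ'.card : ℝ) ^ 2 * (pl Λ j - pl Λ' j) ^ 2)).card : ℝ)
        / 2 ^ Λ.card
      ≤ 4 * L * Real.exp (-v / (2 * pl Λ j * Λ.card)) := by
  have hN : 0 < Λ.card := hne.card_pos
  have hNR : (0:ℝ) < Λ.card := by exact_mod_cast hN
  set Mn : ℕ := Finset.univ.sup (fun α : F => (Λ.filter (fun c => c j = α)).card) with hMn
  have hunivne : (Finset.univ : Finset F).Nonempty := ⟨0, Finset.mem_univ 0⟩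
  obtain ⟨astar, -, hastar⟩ := Finset.exists_mem_eq_sup Finset.univ hunivne
    (fun α : F => (Λ.filter (fun c => c j = α)).card)
  have hM1 : 1 ≤ Mn := by
    obtain ⟨c0, hc0⟩ := hne
    have h1 : c0 ∈ Λ.filter (fun c => c j = c0 j) := Finset.mem_filter.2 ⟨hc0, rfl⟩
    calc 1 ≤ (Λ.filter (fun c => c j = c0 j)).card := Finset.card_pos.2 ⟨c0, h1⟩
      _ ≤ Mn := Finset.le_sup (f := fun α : F => (Λ.filter (fun c => c j = α)).card)
          (Finset.mem_univ (c0 j))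
  have hMR : (0:ℝ) < (Mn : ℝ) := by exact_mod_cast hM1
  have hMN : Mn ≤ Λ.card :=
    Finset.sup_le (fun α _ => Finset.card_le_card (Finset.filter_subset _ _))
  have hNp : (Λ.card : ℝ) * pl Λ j = (Mn : ℝ) := card_mul_pl Λ j
  have hp0 : 0 ≤ pl Λ j := by
    rw [pl]; positivity
  have hp1 : pl Λ j ≤ 1 := by
    have hMNR : (Mn : ℝ) ≤ (Λ.card : ℝ) := by exact_mod_cast hMN
    nlinarith
  set t := Real.sqrt v with htdef
  have ht0 : 0 ≤ t := Real.sqrt_nonneg v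
  have ht2 : t ^ 2 = v := Real.sq_sqrt hv
  -- weights
  set wup : (Fin n → F) → ℝ := fun c => pl Λ j - (if c j = astar then 1 else 0) with hwup
  set wdn : F → (Fin n → F) → ℝ := fun α c => (if c j = α then 1 else 0) - pl Λ j with hwdn
  have hsum_chi : ∀ (u : Finset (Fin n → F)) (α : F),
      ∑ c ∈ u, (if c j = α then (1:ℝ) else 0) = ((u.filter (fun c => c j = α)).card : ℝ) := by
    intro u α
    rw [Finset.sum_boole]
  have hsum_up : ∀ u : Finset (Fin n → F),
      ∑ c ∈ u, wup c = (u.card : ℝ) * pl Λ j - ((u.filter (fun c => c j = astar)).card : ℝ) := by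
    intro u
    rw [hwup]
    rw [Finset.sum_sub_distrib, hsum_chi, Finset.sum_const, nsmul_eq_mul]
  have hsum_dn : ∀ (α : F) (u : Finset (Fin n → F)),
      ∑ c ∈ u, wdn α c = ((u.filter (fun c => c j = α)).card : ℝ) - (u.card : ℝ) * pl Λ j := by
    intro α u
    rw [hwdn]
    rw [Finset.sum_sub_distrib, hsum_chi, Finset.sum_const, nsmul_eq_mul]
  have hmean_up : ∑ c ∈ Λ, wup c = 0 := by
    rw [hsum_up, hNp, ← hastar]
    ring
  have hmean_dn : ∀ α : F, ∑ c ∈ Λ, wdn α c ≤ 0 := by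
    intro α
    rw [hsum_dn, hNp]
    have : ((Λ.filter (fun c => c j = α)).card : ℝ) ≤ (Mn : ℝ) := by
      exact_mod_cast Finset.le_sup (f := fun α : F => (Λ.filter (fun c => c j = α)).card)
        (Finset.mem_univ α)
    linarith
  -- variance bound
  have hvar : ∀ α : F,
      ∑ c ∈ Λ, ((if c j = α then (1:ℝ) else 0) - pl Λ j) ^ 2 ≤ (Mn : ℝ) := by
    intro α
    have hterm : ∀ c : (Fin n → F), ((if c j = α then (1:ℝ) else 0) - pl Λ j) ^ 2
        = (if c j = α then (1:ℝ) else 0) * (1 - 2 * pl Λ j) + (pl Λ j) ^ 2 := by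
      intro c
      by_cases h : c j = α <;> simp [h] <;> ring
    rw [Finset.sum_congr rfl (fun c _ => hterm c), Finset.sum_add_distrib,
      ← Finset.sum_mul, hsum_chi, Finset.sum_const, nsmul_eq_mul]
    have hm0 : (0:ℝ) ≤ ((Λ.filter (fun c => c j = α)).card : ℝ) := by positivity
    have hmM : ((Λ.filter (fun c => c j = α)).card : ℝ) ≤ (Mn : ℝ) := by
      exact_mod_cast Finset.le_sup (f := fun α : F => (Λ.filter (fun c => c j = α)).card)
        (Finset.mem_univ α)
    have hNp2 : (Λ.card : ℝ) * (pl Λ j) ^ 2 = (Mn : ℝ) * pl Λ j := by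
      rw [sq, ← mul_assoc, hNp]
    nlinarith [mul_nonneg (sub_nonneg.2 hmM) (sub_nonneg.2 hp1),
      mul_nonneg hm0 hp0]
  have hvar_up : ∑ c ∈ Λ, wup c ^ 2 ≤ (Mn : ℝ) := by
    refine le_trans (le_of_eq ?_) (hvar astar)
    apply Finset.sum_congr rfl
    intro c _
    rw [hwup]
    ring
  have hvar_dn : ∀ α : F, ∑ c ∈ Λ, wdn α c ^ 2 ≤ (Mn : ℝ) := fun α => hvar α
  -- events
  set A : Finset F := Λ.image (fun c => c j) with hA
  set Fup : Finset (Finset (Fin n → F)) :=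
    Λ.powerset.filter (fun u => (∑ c ∈ Λ, wup c) / 2 + t < ∑ c ∈ u, wup c) with hFup
  set Fdn : F → Finset (Finset (Fin n → F)) :=
    fun α => Λ.powerset.filter (fun u => (∑ c ∈ Λ, wdn α c) / 2 + t < ∑ c ∈ u, wdn α c)
    with hFdn
  -- subset claim
  have hsub : Λ.powerset.filter (fun Λ' =>
        v < (Λ'.card : ℝ) ^ 2 * (pl Λ j - pl Λ' j) ^ 2)
      ⊆ Fup ∪ A.biUnion Fdn := by
    intro u hu
    rw [Finset.mem_filter, Finset.mem_powerset] at hu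
    obtain ⟨husub, hev⟩ := hu
    set X : ℝ := (u.card : ℝ) * pl Λ j
      - ((Finset.univ.sup (fun α : F => (u.filter (fun c => c j = α)).card) : ℕ) : ℝ) with hX
    have hXsq : (u.card : ℝ) ^ 2 * (pl Λ j - pl u j) ^ 2 = X ^ 2 := by
      rw [hX, ← card_mul_pl u j]
      ring
    have habs : t < |X| := by
      apply lt_of_pow_lt_pow_left₀ 2 (abs_nonneg X)
      rw [sq_abs, ht2, ← hXsq]
      exact hev
    rcases lt_abs.mp habs with hpos | hneg
    · -- upper tail
      apply Finset.mem_union_left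
      rw [hFup, Finset.mem_filter, Finset.mem_powerset]
      refine ⟨husub, ?_⟩
      rw [hmean_up, hsum_up]
      have hle : ((u.filter (fun c => c j = astar)).card : ℝ)
          ≤ ((Finset.univ.sup (fun α : F => (u.filter (fun c => c j = α)).card) : ℕ) : ℝ) := by
        exact_mod_cast Finset.le_sup (f := fun α : F => (u.filter (fun c => c j = α)).card)
          (Finset.mem_univ astar)
      rw [hX] at hpos
      norm_num
      linarith
    · -- lower tail
      have hXneg2 : 0 < ((Finset.univ.sup (fun α : F => (u.filter (fun c => c j = α)).card) : ℕ) : ℝ) := by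
        by_contra hcon
        push_neg at hcon
        have h0 : ((Finset.univ.sup (fun α : F => (u.filter (fun c => c j = α)).card) : ℕ) : ℝ) = 0 :=
          le_antisymm hcon (by positivity)
        rw [hX, h0] at hneg
        have : (0:ℝ) ≤ (u.card : ℝ) * pl Λ j := by positivity
        linarith
      obtain ⟨β, -, hβ⟩ := Finset.exists_mem_eq_sup Finset.univ hunivne
        (fun α : F => (u.filter (fun c => c j = α)).card)
      have hfilpos : 0 < (u.filter (fun c => c j = β)).card := by
        rw [← hβ]
        exact_mod_cast hXneg2
      obtain ⟨c1, hc1⟩ := Finset.card_pos.mp hfilpos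
      rw [Finset.mem_filter] at hc1
      have hβA : β ∈ A := by
        rw [hA, Finset.mem_image]
        exact ⟨c1, husub hc1.1, hc1.2⟩
      apply Finset.mem_union_right
      apply Finset.mem_biUnion.2
      refine ⟨β, hβA, ?_⟩
      rw [hFdn]
      rw [Finset.mem_filter, Finset.mem_powerset]
      refine ⟨husub, ?_⟩
      have hXeq : ∑ c ∈ u, wdn β c = -X := by
        rw [hsum_dn β u, hX, ← hβ]
        ring
      have hmd' : ((Λ.filter (fun c => c j = β)).card : ℝ) - (Λ.card : ℝ) * pl Λ j ≤ 0 := by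
        rw [← hsum_dn β Λ]
        exact hmean_dn β
      rw [hXeq, hsum_dn β Λ]
      linarith
  -- counting
  have hcnt_up : ((Fup.card : ℕ) : ℝ) ≤ 2 ^ Λ.card * Real.exp (-2 * t ^ 2 / (Mn : ℝ)) :=
    chernoff Λ wup t (Mn : ℝ) ht0 hMR hvar_up
  have hcnt_dn : ∀ α : F, (((Fdn α).card : ℕ) : ℝ) ≤ 2 ^ Λ.card * Real.exp (-2 * t ^ 2 / (Mn : ℝ)) :=
    fun α => chernoff Λ (wdn α) t (Mn : ℝ) ht0 hMR (hvar_dn α)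
  have hAL : A.card ≤ L := le_trans (Finset.card_image_le) hcard
  have hcount : ((Λ.powerset.filter (fun Λ' =>
        v < (Λ'.card : ℝ) ^ 2 * (pl Λ j - pl Λ' j) ^ 2)).card : ℝ)
      ≤ (1 + L) * (2 ^ Λ.card * Real.exp (-2 * t ^ 2 / (Mn : ℝ))) := by
    have h1 : (Λ.powerset.filter (fun Λ' =>
        v < (Λ'.card : ℝ) ^ 2 * (pl Λ j - pl Λ' j) ^ 2)).card
        ≤ Fup.card + ∑ α ∈ A, (Fdn α).card := by
      calc _ ≤ (Fup ∪ A.biUnion Fdn).card := Finset.card_le_card hsub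
        _ ≤ Fup.card + (A.biUnion Fdn).card := Finset.card_union_le _ _
        _ ≤ Fup.card + ∑ α ∈ A, (Fdn α).card := by
            exact Nat.add_le_add_left (Finset.card_biUnion_le) _
    have h2 : ((Λ.powerset.filter (fun Λ' =>
        v < (Λ'.card : ℝ) ^ 2 * (pl Λ j - pl Λ' j) ^ 2)).card : ℝ)
        ≤ (Fup.card : ℝ) + ∑ α ∈ A, ((Fdn α).card : ℝ) := by
      have := h1
      push_cast
      exact_mod_cast this
    refine h2.trans ?_
    have h3 : ∑ α ∈ A, ((Fdn α).card : ℝ)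
        ≤ (A.card : ℝ) * (2 ^ Λ.card * Real.exp (-2 * t ^ 2 / (Mn : ℝ))) := by
      rw [← nsmul_eq_mul]
      exact Finset.sum_le_card_nsmul _ _ _ (fun α _ => hcnt_dn α)
    have hALR : (A.card : ℝ) ≤ (L : ℝ) := by exact_mod_cast hAL
    have hE : (0:ℝ) ≤ 2 ^ Λ.card * Real.exp (-2 * t ^ 2 / (Mn : ℝ)) := by positivity
    nlinarith
  -- final assembly
  have h2M : 2 * pl Λ j * (Λ.card : ℝ) = 2 * (Mn : ℝ) := by
    rw [mul_assoc, mul_comm (pl Λ j), hNp]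
  rw [div_le_iff₀ (by positivity : (0:ℝ) < 2 ^ Λ.card)]
  refine hcount.trans ?_
  have hexp_le : Real.exp (-2 * t ^ 2 / (Mn : ℝ)) ≤ Real.exp (-v / (2 * pl Λ j * Λ.card)) := by
    apply Real.exp_le_exp.2
    rw [h2M, ht2]
    rw [div_le_div_iff₀ (by positivity) (by positivity)]
    nlinarith
  have hLR : (1:ℝ) + L ≤ 4 * L := by
    have : (1:ℝ) ≤ (L : ℝ) := by exact_mod_cast hL
    linarith
  calc (1 + (L:ℝ)) * (2 ^ Λ.card * Real.exp (-2 * t ^ 2 / (Mn : ℝ)))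
      ≤ (4 * L) * (2 ^ Λ.card * Real.exp (-v / (2 * pl Λ j * Λ.card))) := by
        apply mul_le_mul hLR ?_ (by positivity) (by positivity)
        exact mul_le_mul_of_nonneg_left hexp_le (by positivity)
    _ = 4 * L * Real.exp (-v / (2 * pl Λ j * Λ.card)) * 2 ^ Λ.card := by ring
end
end

section
/- Let q be a prime power, 0 < ε ≤ 1, and let c' : 𝔽_q^k → 𝔽_q^{n'} be an injective map with d(c'(x), c'(y)) ≥ 1 − 1/q − ε²/2 for all distinct x, y ∈ 𝔽_q^k. Let L be an integer with 2/ε² ≤ L ≤ q^k, let n ≥ 1, and let c be a randomly sampled version of c' of block length n. Then for every subset Λ ⊆ 𝔽_q^k with |Λ| = L: 𝔼[ max over z ∈ 𝔽_q^n of Σ_{x∈Λ} agr(c(x), z) ] ≤ n·L·(1/q + ε), where the expectation is over the random sampling. -/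
open Finset

noncomputable section

set_option maxHeartbeats 1600000 in
/-- the bound on the quantity 𝓔 from the proof of Corollary 4.2.
A randomly sampled version of `c'` is given by a uniformly random sampling map
`s : Fin n → Fin n'`, via `x ↦ (c' x) ∘ s`; the expectation over the sampling
is the uniform average over all `s`. -/
theorem stmt_17
    {F : Type} [Field F] [Fintype F] [DecidableEq F]
    (q k n' : ℕ) (hq : q = Fintype.card F) (hk : 0 < k) (hn' : 0 < n')
    (ε : ℝ) (hε0 : 0 < ε) (hε1 : ε ≤ 1)
    (c' : (Fin k → F) → Fin n' → F) (hinj : Function.Injective c')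
    (hdist : ∀ x y : Fin k → F, x ≠ y →
      1 - 1 / (q : ℝ) - ε ^ 2 / 2 ≤ rdist (c' x) (c' y))
    (L : ℕ) (hL1 : 2 / ε ^ 2 ≤ (L : ℝ)) (hL2 : L ≤ q ^ k)
    (n : ℕ) (hn : 1 ≤ n)
    (Λ : Finset (Fin k → F)) (hΛ : Λ.card = L) :
    ((Fintype.card (Fin n → Fin n') : ℝ))⁻¹ *
        ∑ s : Fin n → Fin n',
          (⨆ z : Fin n → F, ∑ x ∈ Λ, (agr (fun j => c' x (s j)) z : ℝ))
      ≤ n * L * (1 / (q : ℝ) + ε) := by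
  classical
  haveI : Nonempty F := ⟨0⟩
  have hqcard : (2:ℕ) ≤ q := by rw [hq]; exact Fintype.one_lt_card
  have hq0 : (0:ℝ) < q := by
    have : (0:ℕ) < q := by omega
    exact_mod_cast this
  have hq0' : (q:ℝ) ≠ 0 := ne_of_gt hq0
  have hn'0 : (0:ℝ) < (n':ℝ) := by exact_mod_cast hn'
  have hε2 : (0:ℝ) < ε^2 := by positivity
  have hL0 : (0:ℝ) < (L:ℝ) := lt_of_lt_of_le (by positivity) hL1
  have hLe : (2:ℝ) ≤ (L:ℝ) * ε^2 := by
    rw [div_le_iff₀ hε2] at hL1; linarith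
  set D : ℝ := 1/(q:ℝ) + ε^2/2 with hD
  have hD0 : 0 ≤ D := by rw [hD]; positivity
  set N : Fin n' → F → ℕ := fun t a => (Λ.filter (fun x => c' x t = a)).card with hNdef
  set M : Fin n' → ℝ := fun t => ((univ.sup (N t) : ℕ) : ℝ) with hMdef
  -- (a) total count
  have hNsum : ∀ t : Fin n', ∑ a : F, ((N t a : ℝ)) = L := by
    intro t
    have h := Finset.card_eq_sum_card_fiberwise
      (s := Λ) (t := (univ : Finset F)) (f := fun x => c' x t) (fun x _ => mem_univ _)
    rw [hΛ] at h
    have : ∑ a : F, (N t a : ℝ) = ((∑ a : F, N t a : ℕ) : ℝ) := by push_cast; rfl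
    rw [this, hNdef]
    exact_mod_cast h.symm
  -- indicator representation
  have hNind : ∀ (t : Fin n') (a : F),
      (N t a : ℝ) = ∑ x ∈ Λ, (if c' x t = a then (1:ℝ) else 0) := by
    intro t a
    rw [Finset.sum_boole, hNdef]
  -- (b) sum of squares as pairwise agreements
  have hNsq : ∀ t : Fin n', ∑ a : F, (N t a : ℝ)^2
      = ∑ x ∈ Λ, ∑ y ∈ Λ, (if c' x t = c' y t then (1:ℝ) else 0) := by
    intro t
    have key : ∀ a : F, (N t a:ℝ)^2 = ∑ x ∈ Λ, ∑ y ∈ Λ,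
        (if c' x t = a ∧ c' y t = a then (1:ℝ) else 0) := by
      intro a
      rw [sq, hNind, Finset.sum_mul_sum]
      refine Finset.sum_congr rfl fun x _ => Finset.sum_congr rfl fun y _ => ?_
      by_cases h1 : c' x t = a <;> by_cases h2 : c' y t = a <;> simp [h1, h2]
    rw [Finset.sum_congr rfl (fun a _ => key a), Finset.sum_comm]
    refine Finset.sum_congr rfl fun x _ => ?_
    rw [Finset.sum_comm]
    refine Finset.sum_congr rfl fun y _ => ?_
    by_cases h : c' x t = c' y t
    · rw [if_pos h]
      simp only [← h, and_self]
      rw [Finset.sum_ite_eq (univ : Finset F) (c' x t) (fun _ => (1:ℝ))]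
      simp
    · rw [if_neg h]
      apply Finset.sum_eq_zero
      intro a _
      rw [if_neg]
      rintro ⟨h1, h2⟩; exact h (h1.trans h2.symm)
  -- agreements as sums of indicators
  have hagr_sum : ∀ x y : Fin k → F,
      ∑ t : Fin n', (if c' x t = c' y t then (1:ℝ) else 0) = (agr (c' x) (c' y) : ℝ) := by
    intro x y
    rw [Finset.sum_boole]
    rfl
  have hagr_self : ∀ x : Fin k → F, (agr (c' x) (c' x) : ℝ) = n' := by
    intro x
    simp [agr]
  have hagr_ne : ∀ x y : Fin k → F, x ≠ y → (agr (c' x) (c' y) : ℝ) ≤ (n':ℝ) * D := by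
    intro x y hxy
    have h1 := hdist x y hxy
    have h2 : (agr (c' x) (c' y) : ℝ)
        + ((univ.filter fun j => ¬ (c' x j = c' y j)).card : ℝ) = (n':ℝ) := by
      have h := Finset.card_filter_add_card_filter_not
        (s := (univ : Finset (Fin n'))) (p := fun j => c' x j = c' y j)
      rw [Finset.card_univ, Fintype.card_fin] at h
      have : agr (c' x) (c' y) + (univ.filter fun j => ¬ (c' x j = c' y j)).card = n' := h
      exact_mod_cast this
    have h3 : rdist (c' x) (c' y)
        = ((univ.filter fun j => ¬ (c' x j = c' y j)).card : ℝ) / (n':ℝ) := rfl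
    rw [h3, le_div_iff₀ hn'0] at h1
    rw [hD]
    nlinarith [h1, h2]
  -- (e) bound on total sum of squares
  have hA : ∑ t : Fin n', ∑ a : F, (N t a:ℝ)^2 ≤ (n':ℝ) * L + (n':ℝ) * (L:ℝ)^2 * D := by
    have h1 : ∑ t : Fin n', ∑ a : F, (N t a:ℝ)^2
        = ∑ x ∈ Λ, ∑ y ∈ Λ, (agr (c' x) (c' y) : ℝ) := by
      rw [Finset.sum_congr rfl fun t _ => hNsq t, Finset.sum_comm]
      refine Finset.sum_congr rfl fun x _ => ?_
      rw [Finset.sum_comm]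
      exact Finset.sum_congr rfl fun y _ => hagr_sum x y
    rw [h1]
    have hbound : ∀ x ∈ Λ, ∑ y ∈ Λ, (agr (c' x) (c' y):ℝ) ≤ (n':ℝ) + L*((n':ℝ)*D) := by
      intro x hx
      rw [← Finset.add_sum_erase Λ _ hx]
      have h2 : ∑ y ∈ Λ.erase x, (agr (c' x) (c' y):ℝ) ≤ ((Λ.erase x).card) • ((n':ℝ)*D) := by
        apply Finset.sum_le_card_nsmul
        intro y hy
        exact hagr_ne x y (Finset.ne_of_mem_erase hy).symm
      rw [nsmul_eq_mul] at h2
      have h3 : (((Λ.erase x).card : ℕ) : ℝ) ≤ (L:ℝ) := by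
        have := Finset.card_erase_le (s := Λ) (a := x)
        rw [hΛ] at this
        exact_mod_cast this
      have h4 := hagr_self x
      nlinarith [mul_nonneg hn'0.le hD0]
    calc ∑ x ∈ Λ, ∑ y ∈ Λ, (agr (c' x) (c' y):ℝ)
        ≤ ∑ _x ∈ Λ, ((n':ℝ) + L*((n':ℝ)*D)) := Finset.sum_le_sum hbound
      _ = (L:ℝ) * ((n':ℝ) + L*((n':ℝ)*D)) := by
          rw [Finset.sum_const, hΛ, nsmul_eq_mul]
      _ = (n':ℝ) * L + (n':ℝ) * (L:ℝ)^2 * D := by ring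
  -- (f) variance identity
  set B : Fin n' → ℝ := fun t => ∑ a : F, ((N t a:ℝ) - (L:ℝ)/q)^2 with hBdef
  have hB0 : ∀ t, 0 ≤ B t := fun t => Finset.sum_nonneg fun a _ => sq_nonneg _
  have hBeq : ∀ t, B t = (∑ a : F, (N t a:ℝ)^2) - (L:ℝ)^2/q := by
    intro t
    have e1 : B t = ∑ a : F,
        ((N t a:ℝ)^2 - 2*((L:ℝ)/q)*(N t a) + ((L:ℝ)/q)^2) := by
      rw [hBdef]
      exact Finset.sum_congr rfl fun a _ => by ring
    rw [e1, Finset.sum_add_distrib, Finset.sum_sub_distrib, ← Finset.mul_sum, hNsum,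
      Finset.sum_const, Finset.card_univ, nsmul_eq_mul]
    have hcard : ((Fintype.card F : ℕ) : ℝ) = (q:ℝ) := by exact_mod_cast congrArg Nat.cast hq.symm
    rw [hcard]
    field_simp
    ring
  -- (g) max bound per coordinate
  have hM : ∀ t : Fin n', M t ≤ (L:ℝ)/q + Real.sqrt (B t) := by
    intro t
    obtain ⟨a0, -, ha0⟩ := Finset.exists_mem_eq_sup (univ : Finset F) univ_nonempty (N t)
    have h1 : ((N t a0:ℝ) - (L:ℝ)/q)^2 ≤ B t :=
      Finset.single_le_sum (f := fun a : F => ((N t a:ℝ) - (L:ℝ)/q)^2)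
        (fun a _ => sq_nonneg _) (mem_univ a0)
    have h2 : (N t a0:ℝ) - (L:ℝ)/q ≤ Real.sqrt (B t) := by
      calc (N t a0:ℝ) - (L:ℝ)/q ≤ |(N t a0:ℝ) - (L:ℝ)/q| := le_abs_self _
        _ = Real.sqrt (((N t a0:ℝ) - (L:ℝ)/q)^2) := (Real.sqrt_sq_eq_abs _).symm
        _ ≤ Real.sqrt (B t) := Real.sqrt_le_sqrt h1
    have h3 : M t = ((N t a0 : ℕ) : ℝ) := by rw [hMdef]; exact_mod_cast congrArg Nat.cast ha0
    linarith
  -- (h) total variance bound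
  have hBsum : ∑ t : Fin n', B t ≤ (n':ℝ) * ((L:ℝ)*ε)^2 := by
    have h1 : ∑ t : Fin n', B t
        = (∑ t : Fin n', ∑ a : F, (N t a:ℝ)^2) - (n':ℝ) * ((L:ℝ)^2/q) := by
      rw [Finset.sum_congr rfl fun t _ => hBeq t, Finset.sum_sub_distrib,
        Finset.sum_const, Finset.card_univ, Fintype.card_fin, nsmul_eq_mul]
    rw [h1]
    have h3 : (n':ℝ)*(L:ℝ) ≤ (n':ℝ)*((L:ℝ)^2*ε^2/2) := by
      apply mul_le_mul_of_nonneg_left _ hn'0.le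
      nlinarith [hL0, hLe]
    have h2 := hA
    rw [hD] at h2
    have h4 : (n':ℝ)*(L:ℝ)^2*(1/(q:ℝ)+ε^2/2)
        = (n':ℝ)*((L:ℝ)^2/q) + (n':ℝ)*((L:ℝ)^2*ε^2/2) := by ring
    have h5 : (n':ℝ)*((L:ℝ)*ε)^2
        = (n':ℝ)*((L:ℝ)^2*ε^2/2) + (n':ℝ)*((L:ℝ)^2*ε^2/2) := by ring
    linarith [h2, h3, h4, h5]
  -- (i) Cauchy-Schwarz
  have hsqrt : ∑ t : Fin n', Real.sqrt (B t) ≤ (n':ℝ) * ((L:ℝ)*ε) := by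
    have h0 : 0 ≤ ∑ t : Fin n', Real.sqrt (B t) :=
      Finset.sum_nonneg fun t _ => Real.sqrt_nonneg _
    have h1 : (∑ t : Fin n', Real.sqrt (B t))^2 ≤ (n':ℝ) * ∑ t : Fin n', B t := by
      have hcs := sq_sum_le_card_mul_sum_sq (s := (univ : Finset (Fin n')))
        (f := fun t => Real.sqrt (B t))
      simpa [Real.sq_sqrt (hB0 _), Finset.card_univ] using hcs
    have h3 : (0:ℝ) ≤ (n':ℝ) * ((L:ℝ)*ε) := by positivity
    have h2 : (∑ t : Fin n', Real.sqrt (B t))^2 ≤ ((n':ℝ) * ((L:ℝ)*ε))^2 := by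
      calc (∑ t : Fin n', Real.sqrt (B t))^2 ≤ (n':ℝ) * ∑ t : Fin n', B t := h1
        _ ≤ (n':ℝ) * ((n':ℝ) * ((L:ℝ)*ε)^2) := mul_le_mul_of_nonneg_left hBsum hn'0.le
        _ = ((n':ℝ)*((L:ℝ)*ε))^2 := by ring
    calc ∑ t : Fin n', Real.sqrt (B t)
        = Real.sqrt ((∑ t : Fin n', Real.sqrt (B t))^2) := (Real.sqrt_sq h0).symm
      _ ≤ Real.sqrt (((n':ℝ)*((L:ℝ)*ε))^2) := Real.sqrt_le_sqrt h2
      _ = (n':ℝ)*((L:ℝ)*ε) := Real.sqrt_sq h3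
  -- (j) bound on the sum of maxima
  have hS : ∑ t : Fin n', M t ≤ (n':ℝ) * ((L:ℝ) * (1/(q:ℝ) + ε)) := by
    have h1 : ∑ t : Fin n', M t ≤ ∑ t : Fin n', ((L:ℝ)/q + Real.sqrt (B t)) :=
      Finset.sum_le_sum fun t _ => hM t
    rw [Finset.sum_add_distrib, Finset.sum_const, Finset.card_univ, Fintype.card_fin,
      nsmul_eq_mul] at h1
    have h2 := hsqrt
    have : (n':ℝ)*((L:ℝ)/q) + (n':ℝ)*((L:ℝ)*ε) = (n':ℝ) * ((L:ℝ) * (1/(q:ℝ) + ε)) := by ring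
    linarith
  -- (k) per-sample bound on the supremum
  have hsup : ∀ s : Fin n → Fin n',
      (⨆ z : Fin n → F, ∑ x ∈ Λ, (agr (fun j => c' x (s j)) z : ℝ)) ≤ ∑ j : Fin n, M (s j) := by
    intro s
    apply ciSup_le
    intro z
    have h1 : ∀ x : Fin k → F, (agr (fun j => c' x (s j)) z : ℝ)
        = ∑ j : Fin n, (if c' x (s j) = z j then (1:ℝ) else 0) := by
      intro x
      rw [Finset.sum_boole]
      rfl
    rw [Finset.sum_congr rfl fun x _ => h1 x, Finset.sum_comm]
    apply Finset.sum_le_sum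
    intro j _
    rw [← hNind]
    have h3 : N (s j) (z j) ≤ univ.sup (N (s j)) := Finset.le_sup (mem_univ _)
    simp only [hMdef]
    exact_mod_cast h3
  -- (l) expectation of a single coordinate
  have hcount : ∀ j : Fin n,
      ∑ s : Fin n → Fin n', M (s j) = ((n':ℝ))^(n-1) * ∑ t : Fin n', M t := by
    intro j
    rw [Fintype.sum_equiv (Equiv.funSplitAt j (Fin n'))
      (fun s => M (s j)) (fun p => M p.1) (fun s => rfl)]
    rw [Fintype.sum_prod_type]
    simp only [Finset.sum_const, Finset.card_univ, nsmul_eq_mul]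
    rw [← Finset.mul_sum]
    congr 1
    have hcard : Fintype.card {i : Fin n // i ≠ j} = n - 1 := by
      simp [Fintype.card_subtype_compl, Fintype.card_subtype_eq]
    rw [Fintype.card_fun, hcard, Fintype.card_fin]
    push_cast
    ring
  -- (m) putting it together
  have hcardfun : (Fintype.card (Fin n → Fin n') : ℝ) = (n':ℝ)^n := by
    rw [Fintype.card_fun, Fintype.card_fin, Fintype.card_fin]
    push_cast
    ring
  rw [hcardfun]
  have step1 : ∑ s : Fin n → Fin n',
      (⨆ z : Fin n → F, ∑ x ∈ Λ, (agr (fun j => c' x (s j)) z : ℝ))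
      ≤ ∑ s : Fin n → Fin n', ∑ j : Fin n, M (s j) :=
    Finset.sum_le_sum fun s _ => hsup s
  have step2 : ∑ s : Fin n → Fin n', ∑ j : Fin n, M (s j)
      = (n:ℝ) * (((n':ℝ))^(n-1) * ∑ t : Fin n', M t) := by
    rw [Finset.sum_comm, Finset.sum_congr rfl fun j _ => hcount j,
      Finset.sum_const, Finset.card_univ, Fintype.card_fin, nsmul_eq_mul]
  have hpow : ((n':ℝ))^(n-1) * (n':ℝ) = (n':ℝ)^n := by
    rw [← pow_succ]
    congr 1
    omega
  have hinv : (0:ℝ) ≤ ((n':ℝ)^n)⁻¹ := by positivity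
  have hne : ((n':ℝ))^n ≠ 0 := by positivity
  calc ((n':ℝ)^n)⁻¹ * ∑ s : Fin n → Fin n',
        (⨆ z : Fin n → F, ∑ x ∈ Λ, (agr (fun j => c' x (s j)) z : ℝ))
      ≤ ((n':ℝ)^n)⁻¹ * ((n:ℝ) * (((n':ℝ))^(n-1) * ∑ t : Fin n', M t)) :=
        mul_le_mul_of_nonneg_left (step1.trans (le_of_eq step2)) hinv
    _ ≤ ((n':ℝ)^n)⁻¹ * ((n:ℝ) * (((n':ℝ))^(n-1) * ((n':ℝ) * ((L:ℝ) * (1/(q:ℝ) + ε))))) := by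
        apply mul_le_mul_of_nonneg_left _ hinv
        apply mul_le_mul_of_nonneg_left _ (by positivity)
        exact mul_le_mul_of_nonneg_left hS (by positivity)
    _ = ((n':ℝ)^n)⁻¹ * ((n':ℝ)^n) * ((n:ℝ) * ((L:ℝ) * (1/(q:ℝ) + ε))) := by
        rw [← hpow]; ring
    _ = (n:ℝ) * (L:ℝ) * (1/(q:ℝ) + ε) := by
        rw [inv_mul_cancel₀ hne]; ring
end
end

section
/- Let q be a prime power, 0 < ε ≤ 1, and let c' : 𝔽_q^k → 𝔽_q^{n'} be an injective map with d(c'(x), c'(y)) ≥ 1 − ε² for all distinct x, y ∈ 𝔽_q^k. Let L be an integer with 1/ε ≤ L ≤ q^k, let n ≥ 1, and let c be a randomly sampled version of c' of block length n. Then for every subset Λ ⊆ 𝔽_q^k with |Λ| = L: 𝔼[ max over z ∈ 𝔽_q^n of Σ_{x∈Λ} agr(c(x), z) ] ≤ 2·n·L·ε, where the expectation is over the random sampling. -/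
open Finset

noncomputable section

private lemma sum_eval_aux {n n' : ℕ} (j : Fin n) (g : Fin n' → ℝ) :
    ∑ s : Fin n → Fin n', g (s j) = (n' : ℝ) ^ (n - 1) * ∑ i, g i := by
  classical
  rw [← ((Equiv.piSplitAt j (fun _ : Fin n => Fin n')).symm).sum_comp fun s => g (s j)]
  have h1 : ∀ p : Fin n' × ({ l : Fin n // l ≠ j } → Fin n'),
      ((Equiv.piSplitAt j (fun _ : Fin n => Fin n')).symm p) j = p.1 := by
    intro p
    simp [Equiv.piSplitAt_symm_apply]
  simp_rw [h1]
  rw [Fintype.sum_prod_type]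
  simp only [Finset.sum_const, nsmul_eq_mul, Finset.card_univ]
  rw [← Finset.mul_sum, Fintype.card_fun, Fintype.card_fin]
  have h2 : Fintype.card { l : Fin n // l ≠ j } = n - 1 := by
    rw [Fintype.card_subtype_compl]
    simp
  rw [h2]
  push_cast
  ring

private lemma agr_real {F : Type} [DecidableEq F] {n : ℕ} (u v : Fin n → F) :
    (agr u v : ℝ) = ∑ j, (if u j = v j then (1 : ℝ) else 0) := by
  unfold agr
  rw [Finset.card_filter]
  push_cast
  rfl

set_option maxHeartbeats 2000000 in
/-- the bound on the quantity 𝓔 from the proof of Corollary 4.3.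
A randomly sampled version of `c'` is given by a uniformly random sampling map
`s : Fin n → Fin n'`, via `x ↦ (c' x) ∘ s`; the expectation over the sampling
is the uniform average over all `s`. -/
theorem stmt_18
    {F : Type} [Field F] [Fintype F] [DecidableEq F]
    (q k n' : ℕ) (hq : q = Fintype.card F) (hk : 0 < k) (hn' : 0 < n')
    (ε : ℝ) (hε0 : 0 < ε) (hε1 : ε ≤ 1)
    (c' : (Fin k → F) → Fin n' → F) (hinj : Function.Injective c')
    (hdist : ∀ x y : Fin k → F, x ≠ y → 1 - ε ^ 2 ≤ rdist (c' x) (c' y))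
    (L : ℕ) (hL1 : 1 / ε ≤ (L : ℝ)) (hL2 : L ≤ q ^ k)
    (n : ℕ) (hn : 1 ≤ n)
    (Λ : Finset (Fin k → F)) (hΛ : Λ.card = L) :
    ((Fintype.card (Fin n → Fin n') : ℝ))⁻¹ *
        ∑ s : Fin n → Fin n',
          (⨆ z : Fin n → F, ∑ x ∈ Λ, (agr (fun j => c' x (s j)) z : ℝ))
      ≤ 2 * n * L * ε := by
  classical
  -- basic positivity facts
  have hnR : (1 : ℝ) ≤ (n : ℝ) := by exact_mod_cast hn
  have hn'R : (0 : ℝ) < (n' : ℝ) := by exact_mod_cast hn'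
  have hLε : 1 ≤ (L : ℝ) * ε := by
    rw [div_le_iff₀ hε0] at hL1
    linarith
  have hLpos : (0 : ℝ) < L := by nlinarith
  set N : ℕ := Fintype.card (Fin n → Fin n') with hNdef
  have hNcard : (N : ℝ) = (n' : ℝ) ^ n := by
    rw [hNdef, Fintype.card_fun, Fintype.card_fin, Fintype.card_fin]
    push_cast; ring
  have hNpos : (0 : ℝ) < N := by
    rw [hNcard]; positivity
  -- the inner objective and the supremum
  set g : (Fin n → Fin n') → (Fin n → F) → ℝ :=
    fun s z => ∑ x ∈ Λ, (agr (fun j => c' x (s j)) z : ℝ) with hgdef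
  set S : (Fin n → Fin n') → ℝ := fun s => ⨆ z : Fin n → F, g s z with hSdef
  -- pairwise agreement term
  set P : (Fin n → Fin n') → ℝ :=
    fun s => ∑ x ∈ Λ, ∑ y ∈ Λ.erase x,
      (agr (fun j => c' x (s j)) (fun j => c' y (s j)) : ℝ) with hPdef
  -- the sup is attained
  have hattain : ∀ s, ∃ z, S s = g s z := by
    intro s
    obtain ⟨z, hz⟩ := Finite.exists_max (g s)
    exact ⟨z, le_antisymm (ciSup_le hz) (le_ciSup (Finite.bddAbove_range _) z)⟩
  have hgnonneg : ∀ s z, 0 ≤ g s z := by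
    intro s z
    exact Finset.sum_nonneg fun x _ => by positivity
  -- pointwise key inequality : (g s z)^2 ≤ n * (g s z + P s)
  have key : ∀ s z, (g s z) ^ 2 ≤ (n : ℝ) * (g s z + P s) := by
    intro s z
    set t : Fin n → ℝ := fun j => ∑ x ∈ Λ, (if c' x (s j) = z j then (1:ℝ) else 0)
      with htdef
    have hgt : g s z = ∑ j, t j := by
      rw [hgdef]
      simp only [agr_real]
      rw [Finset.sum_comm]
    have hCS : (∑ j, t j) ^ 2 ≤ (n : ℝ) * ∑ j, (t j) ^ 2 := by
      have := sq_sum_le_card_mul_sum_sq (s := (Finset.univ : Finset (Fin n)))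
        (f := t)
      simpa using this
    have hsq : ∀ j, (t j) ^ 2 ≤ t j + ∑ x ∈ Λ, ∑ y ∈ Λ.erase x,
        (if c' x (s j) = c' y (s j) then (1:ℝ) else 0) := by
      intro j
      have ht2 : (t j) ^ 2 = ∑ x ∈ Λ, ∑ y ∈ Λ,
          (if c' x (s j) = z j then (1:ℝ) else 0) * (if c' y (s j) = z j then (1:ℝ) else 0) := by
        rw [sq, htdef]
        exact Finset.sum_mul_sum Λ Λ _ _
      rw [ht2, htdef]
      have : ∀ x ∈ Λ, (∑ y ∈ Λ,
          (if c' x (s j) = z j then (1:ℝ) else 0) * (if c' y (s j) = z j then (1:ℝ) else 0))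
          ≤ (if c' x (s j) = z j then (1:ℝ) else 0)
            + ∑ y ∈ Λ.erase x, (if c' x (s j) = c' y (s j) then (1:ℝ) else 0) := by
        intro x hx
        rw [← Finset.add_sum_erase Λ _ hx]
        gcongr with y hy
        · by_cases h : c' x (s j) = z j <;> simp [h]
        · split_ifs with h1 h2 h3 <;> simp_all
      calc ∑ x ∈ Λ, ∑ y ∈ Λ, _ ≤ ∑ x ∈ Λ, ((if c' x (s j) = z j then (1:ℝ) else 0)
            + ∑ y ∈ Λ.erase x, (if c' x (s j) = c' y (s j) then (1:ℝ) else 0)) :=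
          Finset.sum_le_sum this
        _ = _ := by rw [Finset.sum_add_distrib]
    have hPsum : ∑ j, (∑ x ∈ Λ, ∑ y ∈ Λ.erase x,
        (if c' x (s j) = c' y (s j) then (1:ℝ) else 0)) = P s := by
      rw [hPdef]
      rw [Finset.sum_comm]
      refine Finset.sum_congr rfl fun x _ => ?_
      rw [Finset.sum_comm]
      refine Finset.sum_congr rfl fun y _ => ?_
      rw [agr_real]
    calc (g s z) ^ 2 = (∑ j, t j) ^ 2 := by rw [hgt]
      _ ≤ (n : ℝ) * ∑ j, (t j) ^ 2 := hCS
      _ ≤ (n : ℝ) * ∑ j, (t j + ∑ x ∈ Λ, ∑ y ∈ Λ.erase x,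
            (if c' x (s j) = c' y (s j) then (1:ℝ) else 0)) := by
          apply mul_le_mul_of_nonneg_left (Finset.sum_le_sum fun j _ => hsq j)
          positivity
      _ = (n : ℝ) * (g s z + P s) := by
          rw [Finset.sum_add_distrib, hPsum, hgt]
  -- expectation of P
  have hEP : ∑ s : Fin n → Fin n', P s ≤ (N : ℝ) * ((n : ℝ) * (L : ℝ)^2 * ε^2) := by
    have hagr_bound : ∀ x y : Fin k → F, x ≠ y →
        (agr (c' x) (c' y) : ℝ) ≤ ε ^ 2 * n' := by
      intro x y hxy
      have hd := hdist x y hxy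
      rw [rdist] at hd
      have h1 : ((1:ℝ) - ε^2) * n'
          ≤ ((Finset.univ.filter (fun j => c' x j ≠ c' y j)).card : ℝ) :=
        (le_div_iff₀ hn'R).mp hd
      have hsplit : agr (c' x) (c' y)
          + (Finset.univ.filter (fun j => c' x j ≠ c' y j)).card = n' := by
        rw [agr]
        simp only [ne_eq]
        rw [Finset.card_filter_add_card_filter_not]
        simp
      have hsplit' : (agr (c' x) (c' y) : ℝ)
          + ((Finset.univ.filter (fun j => c' x j ≠ c' y j)).card : ℝ) = n' := by
        exact_mod_cast hsplit
      nlinarith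
    have hswap : ∑ s : Fin n → Fin n', P s
        = ∑ x ∈ Λ, ∑ y ∈ Λ.erase x, ∑ s : Fin n → Fin n',
            (agr (fun j => c' x (s j)) (fun j => c' y (s j)) : ℝ) := by
      rw [hPdef]
      rw [Finset.sum_comm]
      refine Finset.sum_congr rfl fun x _ => Finset.sum_comm
    rw [hswap]
    have hEagr : ∀ x y : Fin k → F, x ≠ y →
        (∑ s : Fin n → Fin n',
          (agr (fun j => c' x (s j)) (fun j => c' y (s j)) : ℝ))
          ≤ (N : ℝ) * (n : ℝ) * ε ^ 2 := by
      intro x y hxy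
      have hrw : (∑ s : Fin n → Fin n',
          (agr (fun j => c' x (s j)) (fun j => c' y (s j)) : ℝ))
          = ∑ j : Fin n, ((n' : ℝ) ^ (n - 1) * (agr (c' x) (c' y) : ℝ)) := by
        simp_rw [agr_real]
        rw [Finset.sum_comm]
        refine Finset.sum_congr rfl fun j _ => ?_
        exact sum_eval_aux j (fun i => if c' x i = c' y i then (1:ℝ) else 0)
      rw [hrw, Finset.sum_const, Finset.card_univ, Fintype.card_fin, nsmul_eq_mul]
      have h3 : (n' : ℝ) ^ (n - 1) * (agr (c' x) (c' y) : ℝ)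
          ≤ (n' : ℝ) ^ (n - 1) * (ε ^ 2 * n') := by
        apply mul_le_mul_of_nonneg_left (hagr_bound x y hxy)
        positivity
      have h4 : (n' : ℝ) ^ (n - 1) * (n' : ℝ) = (n' : ℝ) ^ n := by
        rw [← pow_succ]
        congr 1
        omega
      calc (n : ℝ) * ((n' : ℝ) ^ (n - 1) * (agr (c' x) (c' y) : ℝ))
          ≤ (n : ℝ) * ((n' : ℝ) ^ (n - 1) * (ε ^ 2 * n')) := by
            apply mul_le_mul_of_nonneg_left h3; positivity
        _ = (N : ℝ) * (n : ℝ) * ε ^ 2 := by rw [hNcard, ← h4]; ring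
    calc ∑ x ∈ Λ, ∑ y ∈ Λ.erase x, ∑ s : Fin n → Fin n',
          (agr (fun j => c' x (s j)) (fun j => c' y (s j)) : ℝ)
        ≤ ∑ x ∈ Λ, ∑ y ∈ Λ.erase x, (N : ℝ) * (n : ℝ) * ε ^ 2 := by
          refine Finset.sum_le_sum fun x hx => Finset.sum_le_sum fun y hy => ?_
          exact hEagr x y (Ne.symm (Finset.ne_of_mem_erase hy))
      _ ≤ (N : ℝ) * ((n : ℝ) * (L : ℝ)^2 * ε^2) := by
          simp only [Finset.sum_const, nsmul_eq_mul]
          have hcard : ∀ x ∈ Λ, ((Λ.erase x).card : ℝ) ≤ (L : ℝ) := by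
            intro x hx
            have h := Finset.card_erase_le (s := Λ) (a := x)
            rw [hΛ] at h
            exact_mod_cast le_trans h (le_refl L)
          calc ∑ x ∈ Λ, ((Λ.erase x).card : ℝ) * ((N : ℝ) * (n : ℝ) * ε ^ 2)
              ≤ ∑ x ∈ Λ, (L : ℝ) * ((N : ℝ) * (n : ℝ) * ε ^ 2) := by
                refine Finset.sum_le_sum fun x hx => ?_
                apply mul_le_mul_of_nonneg_right (hcard x hx)
                positivity
            _ = (L : ℝ) * (L : ℝ) * ((N : ℝ) * (n : ℝ) * ε ^ 2) := by
                rw [Finset.sum_const, hΛ, nsmul_eq_mul]; ring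
            _ = (N : ℝ) * ((n : ℝ) * (L : ℝ)^2 * ε^2) := by ring
  -- put it together
  set M : ℝ := (N : ℝ)⁻¹ * ∑ s : Fin n → Fin n', S s with hMdef
  have hSnonneg : ∀ s, 0 ≤ S s := by
    intro s
    obtain ⟨z, hz⟩ := hattain s
    rw [hz]; exact hgnonneg s z
  have hMnonneg : 0 ≤ M := by
    rw [hMdef]
    apply mul_nonneg (le_of_lt (inv_pos.mpr hNpos))
    exact Finset.sum_nonneg fun s _ => hSnonneg s
  have hNne : (N : ℝ) ≠ 0 := ne_of_gt hNpos
  have hJensen : M ^ 2 ≤ (N : ℝ)⁻¹ * ∑ s : Fin n → Fin n', (S s) ^ 2 := by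
    have hCS := sq_sum_le_card_mul_sum_sq
      (s := (Finset.univ : Finset (Fin n → Fin n'))) (f := S)
    rw [Finset.card_univ] at hCS
    calc M ^ 2 = (N:ℝ)⁻¹ * (N:ℝ)⁻¹ * (∑ s : Fin n → Fin n', S s) ^ 2 := by
          rw [hMdef]; ring
      _ ≤ (N:ℝ)⁻¹ * (N:ℝ)⁻¹ * ((N:ℝ) * ∑ s : Fin n → Fin n', (S s) ^ 2) := by
          apply mul_le_mul_of_nonneg_left hCS (by positivity)
      _ = (N:ℝ)⁻¹ * (((N:ℝ)⁻¹ * (N:ℝ)) * ∑ s : Fin n → Fin n', (S s) ^ 2) := by ring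
      _ = (N:ℝ)⁻¹ * ∑ s : Fin n → Fin n', (S s) ^ 2 := by
          rw [inv_mul_cancel₀ hNne, one_mul]
  have hS2 : ∑ s : Fin n → Fin n', (S s) ^ 2
      ≤ (n : ℝ) * (∑ s : Fin n → Fin n', S s + ∑ s : Fin n → Fin n', P s) := by
    rw [← Finset.sum_add_distrib, Finset.mul_sum]
    refine Finset.sum_le_sum fun s _ => ?_
    obtain ⟨z, hz⟩ := hattain s
    rw [hz]
    exact key s z
  have hquad : M ^ 2 ≤ (n : ℝ) * M + (n : ℝ)^2 * (L : ℝ)^2 * ε^2 := by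
    calc M ^ 2 ≤ (N : ℝ)⁻¹ * ∑ s, (S s)^2 := hJensen
      _ ≤ (N : ℝ)⁻¹ * ((n : ℝ) * (∑ s, S s + ∑ s, P s)) := by
          apply mul_le_mul_of_nonneg_left hS2 (le_of_lt (inv_pos.mpr hNpos))
      _ = (n : ℝ) * M + (n : ℝ) * ((N:ℝ)⁻¹ * ∑ s, P s) := by
          rw [hMdef]; ring
      _ ≤ (n : ℝ) * M + (n : ℝ) * ((N:ℝ)⁻¹ * ((N : ℝ) * ((n : ℝ) * (L : ℝ)^2 * ε^2))) := by
          apply (add_le_add_iff_left _).mpr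
          apply mul_le_mul_of_nonneg_left _ (by positivity)
          exact mul_le_mul_of_nonneg_left hEP (le_of_lt (inv_pos.mpr hNpos))
      _ = (n : ℝ) * M + (n : ℝ) * (((N:ℝ)⁻¹ * (N:ℝ)) * ((n : ℝ) * (L : ℝ)^2 * ε^2)) := by
          ring
      _ = (n : ℝ) * M + (n : ℝ)^2 * (L : ℝ)^2 * ε^2 := by
          rw [inv_mul_cancel₀ hNne, one_mul]; ring
  -- final arithmetic : M ≤ 2 n L ε
  show M ≤ 2 * ((n : ℝ)) * L * ε
  by_contra hcon
  push_neg at hcon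
  have hnpos : (0:ℝ) < n := lt_of_lt_of_le one_pos hnR
  have hBpos : (0:ℝ) < (n : ℝ) * (L : ℝ) * ε := mul_pos (mul_pos hnpos hLpos) hε0
  have hB : (n : ℝ) ≤ (n : ℝ) * (L : ℝ) * ε := by
    have := le_mul_of_one_le_right (le_of_lt hnpos) hLε
    linarith [this]
  have hcon' : (n : ℝ) * (L : ℝ) * ε + (n : ℝ) * (L : ℝ) * ε < M := by linarith
  have hMpos : 0 < M := lt_trans (by linarith) hcon'
  have h1 : ((n : ℝ) * (L : ℝ) * ε + (n : ℝ) * (L : ℝ) * ε) * M < M * M :=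
    mul_lt_mul_of_pos_right hcon' hMpos
  have h2 : (n : ℝ) * M ≤ ((n : ℝ) * (L : ℝ) * ε) * M :=
    mul_le_mul_of_nonneg_right hB hMnonneg
  have h3 : ((n : ℝ) * (L : ℝ) * ε) * ((n : ℝ) * (L : ℝ) * ε + (n : ℝ) * (L : ℝ) * ε)
      < ((n : ℝ) * (L : ℝ) * ε) * M := mul_lt_mul_of_pos_left hcon' hBpos
  have hM2 : M * M = M ^ 2 := (sq M).symm
  have hBsq : ((n : ℝ) * (L : ℝ) * ε) * ((n : ℝ) * (L : ℝ) * ε)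
      = (n : ℝ)^2 * (L : ℝ)^2 * ε^2 := by ring
  nlinarith [h1, h2, h3, hquad, hM2, hBsq, hBpos]
end
end

section
/- Let q be a prime power, n, k positive integers, c : 𝔽_q^k → 𝔽_q^n any map, z ∈ 𝔽_q^n, and Λ ⊆ 𝔽_q^k with |Λ| = L. For each coordinate j ∈ {1,…,n} let a_j = |{x ∈ Λ : c(x)_j = z_j}|. Then Σ_{j=1}^n binom(a_j, 2) ≤ L(L−1)n/2 − (n/2) · Σ_{(x,y) : x,y ∈ Λ, x ≠ y} d(c(x), c(y)), where the last sum ranges over ordered pairs of distinct elements of Λ. -/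
open Finset

noncomputable section

/-- the key counting inequality from the proof of the paper's
second average-radius Johnson bound (Theorem A.2).  Here
`a j = |{x ∈ Λ : c(x)_j = z_j}|` and the double sum ranges over ordered pairs
of distinct elements of `Λ`. -/
theorem stmt_19
    {F : Type} [Field F] [Fintype F] [DecidableEq F]
    (n k : ℕ) (hn : 0 < n) (hk : 0 < k)
    (c : (Fin k → F) → Fin n → F)
    (z : Fin n → F)
    (Λ : Finset (Fin k → F)) (L : ℕ) (hΛ : Λ.card = L)
    (a : Fin n → ℕ) (ha : ∀ j, a j = (Λ.filter (fun x => c x j = z j)).card) :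
    ∑ j : Fin n, ((a j).choose 2 : ℝ)
      ≤ (L : ℝ) * ((L : ℝ) - 1) * n / 2
        - ((n : ℝ) / 2) * ∑ x ∈ Λ, ∑ y ∈ Λ.erase x, rdist (c x) (c y) := by
  classical
  have hn' : (n : ℝ) ≠ 0 := Nat.cast_ne_zero.mpr hn.ne'
  set E : Fin n → ℕ :=
    fun j => ∑ x ∈ Λ, ((Λ.erase x).filter (fun y => c x j = c y j)).card with hE
  -- pointwise bound: a j * (a j - 1) ≤ E j
  have keyN : ∀ j, a j * (a j - 1) ≤ E j := by
    intro j
    rw [ha j]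
    set S := Λ.filter (fun x => c x j = z j) with hSdef
    calc S.card * (S.card - 1) = ∑ _x ∈ S, (S.card - 1) := by
          rw [Finset.sum_const, smul_eq_mul]
      _ ≤ ∑ x ∈ S, ((Λ.erase x).filter (fun y => c x j = c y j)).card := by
          apply Finset.sum_le_sum
          intro x hx
          have hx' : c x j = z j := (Finset.mem_filter.mp hx).2
          have hsub : S.erase x ⊆ (Λ.erase x).filter (fun y => c x j = c y j) := by
            intro y hy
            have hy1 : y ≠ x := (Finset.mem_erase.mp hy).1
            have hy2 := Finset.mem_filter.mp (Finset.mem_erase.mp hy).2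
            refine Finset.mem_filter.mpr ⟨Finset.mem_erase.mpr ⟨hy1, hy2.1⟩, ?_⟩
            rw [hx', hy2.2]
          calc S.card - 1 = (S.erase x).card := (Finset.card_erase_of_mem hx).symm
            _ ≤ _ := Finset.card_le_card hsub
      _ ≤ E j := Finset.sum_le_sum_of_subset (Finset.filter_subset _ _)
  have key : ∀ j, (a j : ℝ) * ((a j : ℝ) - 1) ≤ (E j : ℝ) := by
    intro j
    calc (a j : ℝ) * ((a j : ℝ) - 1)
        ≤ (a j : ℝ) * ((a j - 1 : ℕ) : ℝ) := by
          apply mul_le_mul_of_nonneg_left _ (Nat.cast_nonneg _)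
          rcases Nat.eq_zero_or_pos (a j) with h | h
          · simp [h]
          · rw [Nat.cast_sub h, Nat.cast_one]
      _ = ((a j * (a j - 1) : ℕ) : ℝ) := by rw [Nat.cast_mul]
      _ ≤ (E j : ℝ) := by exact_mod_cast keyN j
  -- rewrite the double sum
  have hrd : ∀ x y : Fin k → F, rdist (c x) (c y)
      = (∑ j : Fin n, (if c x j = c y j then (0:ℝ) else 1)) / n := by
    intro x y
    unfold rdist
    congr 1
    rw [Finset.card_filter]
    push_cast
    refine Finset.sum_congr rfl fun j _ => ?_
    by_cases h : c x j = c y j <;> simp [h]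
  have hsum : ∑ x ∈ Λ, ∑ y ∈ Λ.erase x, rdist (c x) (c y)
      = (∑ j : Fin n, ((L : ℝ) * ((L : ℝ) - 1) - (E j : ℝ))) / n := by
    simp only [hrd, ← Finset.sum_div]
    congr 1
    rw [show (∑ x ∈ Λ, ∑ y ∈ Λ.erase x, ∑ j : Fin n,
          (if c x j = c y j then (0:ℝ) else 1))
        = ∑ j : Fin n, ∑ x ∈ Λ, ∑ y ∈ Λ.erase x,
          (if c x j = c y j then (0:ℝ) else 1) from by
      rw [show (∑ x ∈ Λ, ∑ y ∈ Λ.erase x, ∑ j : Fin n,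
            (if c x j = c y j then (0:ℝ) else 1))
          = ∑ x ∈ Λ, ∑ j : Fin n, ∑ y ∈ Λ.erase x,
            (if c x j = c y j then (0:ℝ) else 1) from
        Finset.sum_congr rfl fun x _ => Finset.sum_comm]
      exact Finset.sum_comm]
    refine Finset.sum_congr rfl fun j _ => ?_
    have inner : ∀ x ∈ Λ, (∑ y ∈ Λ.erase x, (if c x j = c y j then (0:ℝ) else 1))
        = ((L : ℝ) - 1)
          - (((Λ.erase x).filter (fun y => c x j = c y j)).card : ℝ) := by
      intro x hx
      have h1 : ∀ y : Fin k → F, (if c x j = c y j then (0:ℝ) else 1)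
          = 1 - (if c x j = c y j then (1:ℝ) else 0) := fun y => by
        split <;> ring
      simp only [h1]
      rw [Finset.sum_sub_distrib, Finset.sum_boole, Finset.sum_const,
        Finset.card_erase_of_mem hx, hΛ, nsmul_eq_mul, mul_one]
      have hL1 : 1 ≤ L := hΛ ▸ Finset.card_pos.mpr ⟨x, hx⟩
      rw [Nat.cast_sub hL1, Nat.cast_one]
    rw [Finset.sum_congr rfl inner, Finset.sum_sub_distrib, Finset.sum_const,
      hΛ, nsmul_eq_mul]
    congr 1
    push_cast [hE]
    ring
  rw [hsum]
  have hRHS : (L : ℝ) * ((L : ℝ) - 1) * n / 2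
      - ((n : ℝ) / 2) * ((∑ j : Fin n, ((L : ℝ) * ((L : ℝ) - 1) - (E j : ℝ))) / n)
      = ∑ j : Fin n, (E j : ℝ) / 2 := by
    rw [Finset.sum_sub_distrib, Finset.sum_const, Finset.card_univ,
      Fintype.card_fin, nsmul_eq_mul, ← Finset.sum_div]
    field_simp
    ring
  rw [hRHS]
  refine Finset.sum_le_sum fun j _ => ?_
  rw [Nat.cast_choose_two]
  have := key j
  linarith
end
end
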